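/- arXiv:1505.04688 — 7 statements merged into one kernel-verified Lean document; each statement's English description precedes it below -/
import Mathlib

section
/- For all integers j, k ∈ ℤ the following identities hold among monotone creation and annihilation operators on the monotone Fock space: a_k a_j a_j† = a_k if j < k and a_k a_j a_j† = 0 if j ≥ k; a_j a_j† a_k† = a_k† if j < k and a_j a_j† a_k† = 0 if j ≥ k. Moreover, if j ≤ k then a_j a_j† a_k = a_k and a_k† a_j a_j† = a_k†. -/
open scoped InnerProductSpace ComplexOrder
open ContinuousLinearMap Filter

noncomputable section

/-- The monotone Fock space `F_m = ℓ²(Finset ℤ)`, the Hilbert space of square-summable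
complex families indexed by the finite subsets of `ℤ`. -/
abbrev Fm : Type := lp (fun _ : Finset ℤ => ℂ) 2

/-- The canonical orthonormal basis vector `e_A`, for `A` a finite subset of `ℤ`;
`e ∅` is the vacuum vector `Ω`. -/
noncomputable def e (A : Finset ℤ) : Fm := lp.single 2 A 1

/-- `adag` is the family of monotone creation operators: `adag i` sends `e A` to
`e (A ∪ {i})` if `A = ∅` or `i < min A` (equivalently, `i < j` for all `j ∈ A`),
and to `0` otherwise. -/
def CreatesOn (adag : ℤ → (Fm →L[ℂ] Fm)) : Prop :=
  ∀ (i : ℤ) (A : Finset ℤ),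
    adag i (e A) = if ∀ j ∈ A, i < j then e (insert i A) else 0

/-- `a` is the family of monotone annihilation operators: `a i` sends `e A` to
`e (A \ {i})` if `A ≠ ∅` and `i = min A` (equivalently, `i ∈ A` and `i ≤ j` for all
`j ∈ A`), and to `0` otherwise. -/
def AnnihilatesOn (a : ℤ → (Fm →L[ℂ] Fm)) : Prop :=
  ∀ (i : ℤ) (A : Finset ℤ),
    a i (e A) = if i ∈ A ∧ ∀ j ∈ A, i ≤ j then e (A.erase i) else 0

theorem ext_of_e {T S : Fm →L[ℂ] Fm} (h : ∀ A, T (e A) = S (e A)) : T = S := by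
  refine ContinuousLinearMap.ext fun f => ?_
  have hs := lp.hasSum_single (E := fun _ : Finset ℤ => ℂ) (ENNReal.ofNat_ne_top) f
  have hsingle : ∀ A : Finset ℤ, lp.single (E := fun _ : Finset ℤ => ℂ) 2 A (f A)
      = f A • e A := by
    intro A
    rw [e, ← lp.single_smul]
    norm_num
  have hT : HasSum (fun A : Finset ℤ => f A • T (e A)) (T f) := by
    simpa [hsingle] using (hs.mapL T)
  have hS : HasSum (fun A : Finset ℤ => f A • S (e A)) (S f) := by
    simpa [hsingle] using (hs.mapL S)
  exact hT.unique (by simpa [h] using hS)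

/-- Lemma 4.2 (Lemma `lampi1`): for all `j, k ∈ ℤ`,
`a_k a_j a_j† = δ_{k)}(j) a_k`, `a_j a_j† a_k† = δ_{k)}(j) a_k†` (where `δ_{k)}(j) = 1`
if `j < k` and `0` otherwise), and, if `j ≤ k`, `a_j a_j† a_k = a_k` and
`a_k† a_j a_j† = a_k†`. -/
theorem monotone_basic_relations
    (a adag : ℤ → (Fm →L[ℂ] Fm))
    (ha : AnnihilatesOn a) (hadag : CreatesOn adag) (j k : ℤ) :
    (j < k → a k * a j * adag j = a k) ∧
    (j ≥ k → a k * a j * adag j = 0) ∧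
    (j < k → a j * adag j * adag k = adag k) ∧
    (j ≥ k → a j * adag j * adag k = 0) ∧
    (j ≤ k → a j * adag j * a k = a k) ∧
    (j ≤ k → adag k * (a j * adag j) = adag k) := by
  -- key: (a j * adag j) (e A) = if ∀ x ∈ A, j < x then e A else 0
  have key : ∀ A : Finset ℤ, (a j * adag j) (e A)
      = if ∀ x ∈ A, j < x then e A else 0 := by
    intro A
    rw [ContinuousLinearMap.mul_apply, hadag]
    by_cases h : ∀ x ∈ A, j < x
    · rw [if_pos h, if_pos h, ha]
      rw [if_pos ⟨Finset.mem_insert_self j A, by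
        intro x hx
        rcases Finset.mem_insert.mp hx with rfl | hx
        · exact le_refl x
        · exact (h x hx).le⟩]
      rw [Finset.erase_insert (fun hj => lt_irrefl j (h j hj))]
    · rw [if_neg h, if_neg h, map_zero]
  refine ⟨?_, ?_, ?_, ?_, ?_, ?_⟩
  · intro hjk
    refine ext_of_e fun A => ?_
    rw [mul_assoc, ContinuousLinearMap.mul_apply, key]
    by_cases h : ∀ x ∈ A, j < x
    · rw [if_pos h]
    · rw [if_neg h, map_zero, ha]
      rw [if_neg]
      rintro ⟨hkA, hmin⟩
      push_neg at h
      obtain ⟨x, hxA, hxj⟩ := h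
      exact absurd (hmin x hxA) (by omega)
  · intro hjk
    refine ext_of_e fun A => ?_
    rw [mul_assoc, ContinuousLinearMap.mul_apply, key]
    by_cases h : ∀ x ∈ A, j < x
    · rw [if_pos h, ha, if_neg, ContinuousLinearMap.zero_apply]
      rintro ⟨hkA, _⟩
      exact absurd (h k hkA) (by omega)
    · rw [if_neg h, map_zero, ContinuousLinearMap.zero_apply]
  · intro hjk
    refine ext_of_e fun A => ?_
    rw [ContinuousLinearMap.mul_apply, hadag]
    by_cases h : ∀ x ∈ A, k < x
    · rw [if_pos h, key, if_pos]
      intro x hx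
      rcases Finset.mem_insert.mp hx with rfl | hx
      · exact hjk
      · exact hjk.trans (h x hx)
    · rw [if_neg h, map_zero]
  · intro hjk
    refine ext_of_e fun A => ?_
    rw [ContinuousLinearMap.mul_apply, hadag, ContinuousLinearMap.zero_apply]
    by_cases h : ∀ x ∈ A, k < x
    · rw [if_pos h, key, if_neg]
      intro hc
      exact absurd (hc k (Finset.mem_insert_self k A)) (by omega)
    · rw [if_neg h, map_zero]
  · intro hjk
    refine ext_of_e fun A => ?_
    rw [ContinuousLinearMap.mul_apply, ha]
    by_cases h : k ∈ A ∧ ∀ x ∈ A, k ≤ x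
    · rw [if_pos h, key, if_pos]
      intro x hx
      have := h.2 x (Finset.mem_of_mem_erase hx)
      have := Finset.ne_of_mem_erase hx
      omega
    · rw [if_neg h, map_zero]
  · intro hjk
    refine ext_of_e fun A => ?_
    rw [ContinuousLinearMap.mul_apply, key, hadag]
    by_cases h : ∀ x ∈ A, j < x
    · rw [if_pos h, hadag]
    · rw [if_neg h, map_zero, if_neg]
      intro hc
      push_neg at h
      obtain ⟨x, hxA, hxj⟩ := h
      exact absurd (hc x hxA) (by omega)

end
end

section
/- For every vector ξ ∈ F_m, the family (a_k† a_k ξ)_{k ∈ ℤ} is summable in F_m and ∑_{k ∈ ℤ} a_k† a_k ξ = ξ − ⟨ξ, Ω⟩ Ω; equivalently, the net of finite partial sums ∑_{k} a_k† a_k converges in the strong operator topology to I − P_Ω. Moreover, for each i ∈ ℤ and every ξ ∈ F_m, a_i a_i† ξ = ξ − ∑_{k ≤ i} a_k† a_k ξ (the family (a_k† a_k ξ)_{k ≤ i} being summable). -/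
open scoped InnerProductSpace ComplexOrder
open ContinuousLinearMap Filter

noncomputable section

/-- The orthogonal projection `P_Ω` of `F_m` onto `ℂΩ`, `ξ ↦ ⟪Ω, ξ⟫ Ω`. -/
noncomputable def Pom : Fm →L[ℂ] Fm := (innerSL ℂ (e ∅)).smulRight (e ∅)

lemma single_eq (A : Finset ℤ) (c : ℂ) : lp.single 2 A c = c • e A := by
  rw [e, ← lp.single_smul, smul_eq_mul, mul_one]

lemma Tk_e {a adag : ℤ → (Fm →L[ℂ] Fm)} (ha : AnnihilatesOn a) (hadag : CreatesOn adag)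
    (k : ℤ) (A : Finset ℤ) :
    adag k (a k (e A)) = if k ∈ A ∧ ∀ j ∈ A, k ≤ j then e A else 0 := by
  rw [ha]
  split_ifs with h
  · rw [hadag, if_pos, Finset.insert_erase h.1]
    intro j hj
    exact lt_of_le_of_ne (h.2 j (Finset.mem_of_mem_erase hj))
      (Ne.symm (Finset.ne_of_mem_erase hj))
  · simp

lemma Si_e {a adag : ℤ → (Fm →L[ℂ] Fm)} (ha : AnnihilatesOn a) (hadag : CreatesOn adag)
    (i : ℤ) (A : Finset ℤ) :
    a i (adag i (e A)) = if ∀ j ∈ A, i < j then e A else 0 := by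
  rw [hadag]
  split_ifs with h
  · rw [ha, if_pos, Finset.erase_insert]
    · intro hiA; exact absurd (h i hiA) (lt_irrefl i)
    · exact ⟨Finset.mem_insert_self i A, fun j hj => by
        rcases Finset.mem_insert.mp hj with rfl | hj
        · exact le_rfl
        · exact (h j hj).le⟩
  · simp

lemma fiber_hasSum {a adag : ℤ → (Fm →L[ℂ] Fm)} (ha : AnnihilatesOn a) (hadag : CreatesOn adag)
    (k : ℤ) (ξ : Fm) :
    HasSum (fun A : {A : Finset ℤ // k ∈ A ∧ ∀ j ∈ A, k ≤ j} => (ξ A.1 : ℂ) • e A.1)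
      (adag k (a k ξ)) := by
  have h0 : HasSum (fun A : Finset ℤ => lp.single 2 A (ξ A)) ξ :=
    lp.hasSum_single (by norm_num) ξ
  have h1 := ((adag k).comp (a k)).hasSum h0
  simp only [ContinuousLinearMap.coe_comp', Function.comp_apply] at h1
  have h2 : (fun A : Finset ℤ => adag k (a k (lp.single 2 A (ξ A)))) =
      fun A => if k ∈ A ∧ ∀ j ∈ A, k ≤ j then (ξ A : ℂ) • e A else 0 := by
    funext A
    rw [single_eq, map_smul, map_smul, Tk_e ha hadag]
    split_ifs <;> simp
  rw [h2] at h1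
  have hsupp : Function.support
      (fun A : Finset ℤ => if k ∈ A ∧ ∀ j ∈ A, k ≤ j then (ξ A : ℂ) • e A else 0)
      ⊆ {A : Finset ℤ | k ∈ A ∧ ∀ j ∈ A, k ≤ j} := by
    intro A hA
    by_contra h
    exact hA (if_neg h)
  have h3 := (hasSum_subtype_iff_of_support_subset hsupp).mpr h1
  exact h3.congr_fun (fun A => by
    simp only [Function.comp_apply]; exact (if_pos A.2).symm)

lemma sigma_eq {p : ℤ → Finset ℤ → Prop} {k k' : ℤ} {A : {A : Finset ℤ // p k A}}
    {A' : {A : Finset ℤ // p k' A}} (hk : k = k') (hA : A.1 = A'.1) :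
    (⟨k, A⟩ : Σ m : ℤ, {A : Finset ℤ // p m A}) = ⟨k', A'⟩ := by
  subst hk; exact congrArg _ (Subtype.ext hA)

lemma sigma_eq' {i : ℤ} {p : ℤ → Finset ℤ → Prop} {k k' : {k : ℤ // k ≤ i}}
    {A : {A : Finset ℤ // p k.1 A}} {A' : {A : Finset ℤ // p k'.1 A}}
    (hk : k.1 = k'.1) (hA : A.1 = A'.1) :
    (⟨k, A⟩ : Σ m : {k : ℤ // k ≤ i}, {A : Finset ℤ // p m.1 A}) = ⟨k', A'⟩ := by
  have h : k = k' := Subtype.ext hk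
  subst h; exact congrArg _ (Subtype.ext hA)

def minEquiv : (Σ _k : ℤ, {A : Finset ℤ // _k ∈ A ∧ ∀ j ∈ A, _k ≤ j}) ≃
    {A : Finset ℤ // A ≠ ∅} where
  toFun p := ⟨p.2.1, Finset.ne_empty_of_mem p.2.2.1⟩
  invFun A := ⟨A.1.min' (Finset.nonempty_of_ne_empty A.2),
    ⟨A.1, A.1.min'_mem _, fun j hj => A.1.min'_le j hj⟩⟩
  left_inv := by
    rintro ⟨k, A, hk, hmin⟩
    exact sigma_eq (p := fun m A => m ∈ A ∧ ∀ j ∈ A, m ≤ j)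
      (le_antisymm (A.min'_le k hk) (hmin _ (A.min'_mem _))) rfl
  right_inv A := rfl

lemma ne_empty_of_not_forall {i : ℤ} {A : Finset ℤ} (hA : ¬ ∀ j ∈ A, i < j) : A.Nonempty := by
  rcases A.eq_empty_or_nonempty with rfl | h
  · exact absurd (by simp) hA
  · exact h

lemma min_le_of_not_forall {i : ℤ} {A : Finset ℤ} (hA : ¬ ∀ j ∈ A, i < j) :
    A.min' (ne_empty_of_not_forall hA) ≤ i := by
  push_neg at hA
  obtain ⟨j, hj, hji⟩ := hA
  exact le_trans (A.min'_le j hj) hji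

def minEquivLe (i : ℤ) : (Σ k : {k : ℤ // k ≤ i}, {A : Finset ℤ // k.1 ∈ A ∧ ∀ j ∈ A, k.1 ≤ j}) ≃
    {A : Finset ℤ // ¬ ∀ j ∈ A, i < j} where
  toFun p := ⟨p.2.1, fun h => absurd (h p.1.1 p.2.2.1) (not_lt.mpr p.1.2)⟩
  invFun A := ⟨⟨A.1.min' (ne_empty_of_not_forall A.2), min_le_of_not_forall A.2⟩,
    ⟨A.1, A.1.min'_mem (ne_empty_of_not_forall A.2), fun j hj => A.1.min'_le j hj⟩⟩
  left_inv := by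
    rintro ⟨⟨k, hk⟩, A, hkA, hmin⟩
    refine sigma_eq' (p := fun m A => m ∈ A ∧ ∀ j ∈ A, m ≤ j) ?_ rfl
    exact le_antisymm (A.min'_le k hkA) (hmin _ (A.min'_mem ⟨k, hkA⟩))
  right_inv A := rfl

/-- For every `ξ ∈ F_m` the family `(a_k† a_k ξ)_{k ∈ ℤ}` is summable with sum
`ξ − ⟨ξ, Ω⟩ Ω` (so the net of finite partial sums of `∑ₖ a_k† a_k` converges strongly
to `I − P_Ω`); moreover, for each `i ∈ ℤ` and `ξ ∈ F_m`, the family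
`(a_k† a_k ξ)_{k ≤ i}` is summable and `a_i a_i† ξ = ξ − ∑_{k ≤ i} a_k† a_k ξ`. -/
theorem monotone_number_operator_sum
    (a adag : ℤ → (Fm →L[ℂ] Fm))
    (ha : AnnihilatesOn a) (hadag : CreatesOn adag) :
    (∀ ξ : Fm, HasSum (fun k : ℤ => adag k (a k ξ)) (ξ - Pom ξ)) ∧
    (∀ (i : ℤ) (ξ : Fm),
      HasSum (fun k : {k : ℤ // k ≤ i} => adag k.1 (a k.1 ξ)) (ξ - a i (adag i ξ))) := by
  constructor
  · intro ξ
    have h0 : HasSum (fun A : Finset ℤ => lp.single 2 A (ξ A)) ξ :=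
      lp.hasSum_single (by norm_num) ξ
    set Q : Fm →L[ℂ] Fm := ContinuousLinearMap.id ℂ Fm - Pom with hQdef
    have h1 := Q.hasSum h0
    have hQe : ∀ A : Finset ℤ, Q (e A) = if A = ∅ then 0 else e A := by
      intro A
      simp only [hQdef, ContinuousLinearMap.sub_apply, ContinuousLinearMap.id_apply, Pom,
        ContinuousLinearMap.smulRight_apply, innerSL_apply_apply]
      simp only [e]
      rw [lp.inner_single_left]
      by_cases hA : A = ∅
      · subst hA
        simp [lp.single_apply_self]
      · have hv : ((lp.single 2 A (1 : ℂ) : Fm) : ∀ _ : Finset ℤ, ℂ) ∅ = 0 :=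
          lp.single_apply_ne (E := fun _ : Finset ℤ => ℂ) 2 A (1 : ℂ) (Ne.symm hA)
        rw [if_neg hA, hv]
        simp
    have h2 : (fun A : Finset ℤ => Q (lp.single 2 A (ξ A))) =
        fun A => if A = ∅ then 0 else (ξ A : ℂ) • e A := by
      funext A
      rw [single_eq, map_smul, hQe]
      split_ifs <;> simp
    rw [h2] at h1
    have hsupp : Function.support
        (fun A : Finset ℤ => if A = ∅ then 0 else (ξ A : ℂ) • e A)
        ⊆ {A : Finset ℤ | A ≠ ∅} := by
      intro A hA
      by_contra h
      simp only [Set.mem_setOf_eq, not_not] at h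
      exact hA (if_pos h)
    have h3 := (hasSum_subtype_iff_of_support_subset hsupp).mpr h1
    have h3' : HasSum (fun A : {A : Finset ℤ // A ≠ ∅} => (ξ A.1 : ℂ) • e A.1) (Q ξ) :=
      h3.congr_fun (fun A => by
        simp only [Function.comp_apply]; exact (if_neg A.2).symm)
    have h4 := (minEquiv.hasSum_iff).mpr h3'
    have h4' : HasSum (fun p : (Σ _k : ℤ, {A : Finset ℤ // _k ∈ A ∧ ∀ j ∈ A, _k ≤ j}) =>
        (ξ p.2.1 : ℂ) • e p.2.1) (Q ξ) := h4
    have h5 := HasSum.sigma h4' (fun k => fiber_hasSum ha hadag k ξ)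
    have hQ : Q ξ = ξ - Pom ξ := by
      simp [hQdef]
    rwa [hQ] at h5
  · intro i ξ
    have h0 : HasSum (fun A : Finset ℤ => lp.single 2 A (ξ A)) ξ :=
      lp.hasSum_single (by norm_num) ξ
    set Q : Fm →L[ℂ] Fm := ContinuousLinearMap.id ℂ Fm - (a i).comp (adag i) with hQdef
    have h1 := Q.hasSum h0
    have hQe : ∀ A : Finset ℤ, Q (e A) = if ∀ j ∈ A, i < j then 0 else e A := by
      intro A
      simp only [hQdef, ContinuousLinearMap.sub_apply, ContinuousLinearMap.id_apply,
        ContinuousLinearMap.coe_comp', Function.comp_apply]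
      rw [Si_e ha hadag]
      split_ifs <;> simp
    have h2 : (fun A : Finset ℤ => Q (lp.single 2 A (ξ A))) =
        fun A => if ∀ j ∈ A, i < j then 0 else (ξ A : ℂ) • e A := by
      funext A
      rw [single_eq, map_smul, hQe]
      split_ifs <;> simp
    rw [h2] at h1
    have hsupp : Function.support
        (fun A : Finset ℤ => if ∀ j ∈ A, i < j then 0 else (ξ A : ℂ) • e A)
        ⊆ {A : Finset ℤ | ¬ ∀ j ∈ A, i < j} := by
      intro A hA
      by_contra h
      simp only [Set.mem_setOf_eq, not_not] at h
      exact hA (if_pos h)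
    have h3 := (hasSum_subtype_iff_of_support_subset hsupp).mpr h1
    have h3' : HasSum (fun A : {A : Finset ℤ // ¬ ∀ j ∈ A, i < j} => (ξ A.1 : ℂ) • e A.1)
        (Q ξ) := h3.congr_fun (fun A => by
        simp only [Function.comp_apply]; exact (if_neg A.2).symm)
    have h4 := ((minEquivLe i).hasSum_iff).mpr h3'
    have h4' : HasSum (fun p : (Σ k : {k : ℤ // k ≤ i},
        {A : Finset ℤ // k.1 ∈ A ∧ ∀ j ∈ A, k.1 ≤ j}) =>
        (ξ p.2.1 : ℂ) • e p.2.1) (Q ξ) := h4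
    have h5 := HasSum.sigma h4' (fun k => fiber_hasSum ha hadag k.1 ξ)
    have hQ : Q ξ = ξ - a i (adag i ξ) := by
      simp [hQdef]
    rwa [hQ] at h5


end
end

section
/- Two λ-forms are equal exactly when their index data coincide: if m, n, m', n' ≥ 0, i_1 < ⋯ < i_m, j_1 > ⋯ > j_n, k_1 < ⋯ < k_{m'}, h_1 > ⋯ > h_{n'} are integers and a†_{i_1}⋯a†_{i_m} a_{j_1}⋯a_{j_n} = a†_{k_1}⋯a†_{k_{m'}} a_{h_1}⋯a_{h_{n'}} as operators on F_m, then m = m', n = n', i_l = k_l for l = 1,…,m and j_l = h_l for l = 1,…,n. -/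
open scoped InnerProductSpace ComplexOrder
open ContinuousLinearMap Filter

noncomputable section

/-- A λ-form: an operator `X = a†_{i_1}⋯a†_{i_m} a_{j_1}⋯a_{j_n}` with
`i_1 < ⋯ < i_m` and `j_1 > ⋯ > j_n` (the identity `I` when `m = n = 0`). -/
def IsLambdaForm (a adag : ℤ → (Fm →L[ℂ] Fm)) (X : Fm →L[ℂ] Fm) : Prop :=
  ∃ is js : List ℤ, is.Chain' (· < ·) ∧ js.Chain' (· > ·) ∧
    X = (is.map adag).prod * (js.map a).prod

/-- A π-form: an operator `X = a†_{i_1}⋯a†_{i_m} a_k a†_k a_{j_1}⋯a_{j_n}` with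
`i_1 < ⋯ < i_m`, `j_1 > ⋯ > j_n`, `k > i_m` and `k > j_1` (equivalently, `k` exceeds
every index occurring in the increasing and decreasing strings). -/
def IsPiForm (a adag : ℤ → (Fm →L[ℂ] Fm)) (X : Fm →L[ℂ] Fm) : Prop :=
  ∃ (is js : List ℤ) (k : ℤ), is.Chain' (· < ·) ∧ js.Chain' (· > ·) ∧
    (∀ i ∈ is, i < k) ∧ (∀ j ∈ js, j < k) ∧
    X = (is.map adag).prod * (a k * adag k) * (js.map a).prod

lemma e_inj : Function.Injective e := by
  intro A B h
  by_contra hne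
  have h1 : (e A) A = 1 := lp.single_apply_self 2 A 1
  have h2 : (e B) A = 0 := lp.single_apply_ne 2 B 1 hne
  rw [h] at h1
  rw [h1] at h2
  exact one_ne_zero h2

lemma e_ne_zero (A : Finset ℤ) : e A ≠ 0 := by
  intro h
  have h1 : (e A) A = 1 := lp.single_apply_self 2 A 1
  rw [h] at h1
  simp at h1

lemma create_prod {adag : ℤ → (Fm →L[ℂ] Fm)} (hadag : CreatesOn adag) :
    ∀ (is : List ℤ), is.Pairwise (· < ·) → ∀ B : Finset ℤ,
      ((is.map adag).prod) (e B)
        = if ∀ i ∈ is, ∀ b ∈ B, i < b then e (is.toFinset ∪ B) else 0 := by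
  intro is
  induction is with
  | nil => intro _ B; simp [e]
  | cons i t ih =>
    intro hp B
    have hit : ∀ x ∈ t, i < x := fun x hx => (List.pairwise_cons.mp hp).1 x hx
    have hpt : t.Pairwise (· < ·) := (List.pairwise_cons.mp hp).2
    rw [List.map_cons, List.prod_cons, ContinuousLinearMap.mul_apply, ih hpt B]
    by_cases hc : ∀ i ∈ t, ∀ b ∈ B, i < b
    · rw [if_pos hc, hadag]
      by_cases hB : ∀ b ∈ B, i < b
      · have hcond : ∀ j ∈ t.toFinset ∪ B, i < j := by
          intro j hj
          rcases Finset.mem_union.mp hj with hj | hj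
          · exact hit j (List.mem_toFinset.mp hj)
          · exact hB j hj
        rw [if_pos hcond, if_pos]
        · congr 1
          ext x
          simp [or_assoc]
        · intro x hx b hb
          rcases List.mem_cons.mp hx with rfl | hx
          · exact hB b hb
          · exact hc x hx b hb
      · rw [if_neg, if_neg]
        · intro hall
          exact hB fun b hb => hall i (List.mem_cons_self) b hb
        · intro hall
          push_neg at hB
          obtain ⟨b, hb, hnb⟩ := hB
          exact absurd (hall b (Finset.mem_union_right _ hb)) (not_lt.mpr hnb)
    · rw [if_neg hc, map_zero, if_neg]
      intro hall
      exact hc fun x hx b hb => hall x (List.mem_cons_of_mem i hx) b hb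

lemma annih_prod {a : ℤ → (Fm →L[ℂ] Fm)} (ha : AnnihilatesOn a) :
    ∀ (js : List ℤ), js.Pairwise (· > ·) → ∀ A : Finset ℤ,
      ((js.map a).prod) (e A)
        = if (∀ j ∈ js, j ∈ A) ∧ (∀ j ∈ js, ∀ x ∈ A, j ≤ x ∨ x ∈ js) then
            e (A \ js.toFinset) else 0 := by
  intro js
  induction js with
  | nil => intro _ A; simp [e]
  | cons j t ih =>
    intro hp A
    have hjt : ∀ x ∈ t, x < j := fun x hx => (List.pairwise_cons.mp hp).1 x hx
    have hpt : t.Pairwise (· > ·) := (List.pairwise_cons.mp hp).2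
    rw [List.map_cons, List.prod_cons, ContinuousLinearMap.mul_apply, ih hpt A]
    have hjnt : j ∉ t := fun h => lt_irrefl j (hjt j h)
    by_cases hc : (∀ j' ∈ t, j' ∈ A) ∧ (∀ j' ∈ t, ∀ x ∈ A, j' ≤ x ∨ x ∈ t)
    · rw [if_pos hc, ha]
      by_cases hB : j ∈ A \ t.toFinset ∧ ∀ x ∈ A \ t.toFinset, j ≤ x
      · rw [if_pos hB, if_pos]
        · congr 1
          ext x
          simp only [Finset.mem_erase, Finset.mem_sdiff, List.toFinset_cons,
            Finset.mem_insert, List.mem_toFinset]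
          tauto
        · constructor
          · intro j' hj'
            rcases List.mem_cons.mp hj' with rfl | hj'
            · exact (Finset.mem_sdiff.mp hB.1).1
            · exact hc.1 j' hj'
          · intro j' hj' x hx
            by_cases hxt : x ∈ t.toFinset
            · exact Or.inr (List.mem_cons_of_mem j (List.mem_toFinset.mp hxt))
            · have hjx : j ≤ x := hB.2 x (Finset.mem_sdiff.mpr ⟨hx, hxt⟩)
              rcases List.mem_cons.mp hj' with rfl | hj'
              · exact Or.inl hjx
              · exact Or.inl (le_trans (le_of_lt (hjt j' hj')) hjx)
      · rw [if_neg hB, if_neg]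
        rintro ⟨hmem, hle⟩
        apply hB
        constructor
        · refine Finset.mem_sdiff.mpr ⟨hmem j (List.mem_cons_self), ?_⟩
          simpa using hjnt
        · intro x hx
          obtain ⟨hxA, hxt⟩ := Finset.mem_sdiff.mp hx
          rcases hle j (List.mem_cons_self) x hxA with h | h
          · exact h
          · rcases List.mem_cons.mp h with rfl | h
            · exact le_refl x
            · exact absurd (List.mem_toFinset.mpr h) hxt
    · rw [if_neg hc, map_zero, if_neg]
      rintro ⟨hmem, hle⟩
      apply hc
      refine ⟨fun j' hj' => hmem j' (List.mem_cons_of_mem j hj'), ?_⟩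
      intro j' hj' x hx
      rcases hle j' (List.mem_cons_of_mem j hj') x hx with h | h
      · exact Or.inl h
      · rcases List.mem_cons.mp h with rfl | h
        · exact Or.inl (le_of_lt (hjt j' hj'))
        · exact Or.inr h

lemma eval_self {a adag : ℤ → (Fm →L[ℂ] Fm)} (ha : AnnihilatesOn a)
    (hadag : CreatesOn adag) (is js : List ℤ)
    (pis : is.Pairwise (· < ·)) (pjs : js.Pairwise (· > ·)) :
    ((is.map adag).prod * (js.map a).prod) (e js.toFinset) = e is.toFinset := by
  rw [ContinuousLinearMap.mul_apply, annih_prod ha js pjs, if_pos, Finset.sdiff_self]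
  · have h0 : (∅ : Finset ℤ) = (∅ : Finset ℤ) := rfl
    rw [create_prod hadag is pis, if_pos, Finset.union_empty]
    intro i _ b hb
    exact absurd hb (Finset.notMem_empty b)
  · exact ⟨fun j hj => List.mem_toFinset.mpr hj,
      fun j hj x hx => Or.inr (List.mem_toFinset.mp hx)⟩

lemma nonzero_subset {a adag : ℤ → (Fm →L[ℂ] Fm)} (ha : AnnihilatesOn a)
    (ks hs : List ℤ) (phs : hs.Pairwise (· > ·)) (A : Finset ℤ)
    (h : ((ks.map adag).prod * (hs.map a).prod) (e A) ≠ 0) :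
    ∀ j ∈ hs, j ∈ A := by
  by_contra hc
  apply h
  rw [ContinuousLinearMap.mul_apply, annih_prod ha hs phs, if_neg, map_zero]
  rintro ⟨hmem, _⟩
  exact hc hmem

lemma eq_of_pairwise_gt (l1 l2 : List ℤ) (p1 : l1.Pairwise (· > ·))
    (p2 : l2.Pairwise (· > ·)) (h : l1.toFinset = l2.toFinset) : l1 = l2 := by
  haveI : IsAntisymm ℤ (· > ·) := ⟨fun x y h1 h2 => absurd h1 (not_lt.mpr h2.le)⟩
  refine List.Perm.eq_of_pairwise' p1 p2 ?_
  exact List.perm_of_nodup_nodup_toFinset_eq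
    (p1.imp fun h => ne_of_gt h) (p2.imp fun h => ne_of_gt h) h

lemma eq_of_pairwise_lt (l1 l2 : List ℤ) (p1 : l1.Pairwise (· < ·))
    (p2 : l2.Pairwise (· < ·)) (h : l1.toFinset = l2.toFinset) : l1 = l2 := by
  haveI : IsAntisymm ℤ (· < ·) := ⟨fun x y h1 h2 => absurd h1 (not_lt.mpr h2.le)⟩
  refine List.Perm.eq_of_pairwise' p1 p2 ?_
  exact List.perm_of_nodup_nodup_toFinset_eq
    (p1.imp fun h => ne_of_lt h) (p2.imp fun h => ne_of_lt h) h

/-- Lemma 4.4 (i): two λ-forms are equal exactly when their index data coincide.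
Here `is`/`ks` are the (strictly increasing) lists of creation indices and `js`/`hs`
the (strictly decreasing) lists of annihilation indices; equality of the lists encodes
`m = m'`, `n = n'`, `i_l = k_l` and `j_l = h_l`. -/
theorem lambdaForm_inj
    (a adag : ℤ → (Fm →L[ℂ] Fm))
    (ha : AnnihilatesOn a) (hadag : CreatesOn adag)
    (is js ks hs : List ℤ)
    (h1 : is.Chain' (· < ·)) (h2 : js.Chain' (· > ·))
    (h3 : ks.Chain' (· < ·)) (h4 : hs.Chain' (· > ·))
    (heq : (is.map adag).prod * (js.map a).prod
         = (ks.map adag).prod * (hs.map a).prod) :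
    is = ks ∧ js = hs := by
  have p1 := List.isChain_iff_pairwise.mp h1
  have p2 := List.isChain_iff_pairwise.mp h2
  have p3 := List.isChain_iff_pairwise.mp h3
  have p4 := List.isChain_iff_pairwise.mp h4
  have e1 : ((ks.map adag).prod * (hs.map a).prod) (e js.toFinset) = e is.toFinset := by
    rw [← heq]; exact eval_self ha hadag is js p1 p2
  have e2 : ((is.map adag).prod * (js.map a).prod) (e hs.toFinset) = e ks.toFinset := by
    rw [heq]; exact eval_self ha hadag ks hs p3 p4
  have s1 : ∀ j ∈ hs, j ∈ js.toFinset :=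
    nonzero_subset ha ks hs p4 _ (by rw [e1]; exact e_ne_zero _)
  have s2 : ∀ j ∈ js, j ∈ hs.toFinset :=
    nonzero_subset ha is js p2 _ (by rw [e2]; exact e_ne_zero _)
  have hJH : js.toFinset = hs.toFinset := by
    ext x
    simp only [List.mem_toFinset]
    exact ⟨fun hx => List.mem_toFinset.mp (s2 x hx), fun hx => List.mem_toFinset.mp (s1 x hx)⟩
  have hjs : js = hs := eq_of_pairwise_gt js hs p2 p4 hJH
  refine ⟨?_, hjs⟩
  have e3 : ((ks.map adag).prod * (hs.map a).prod) (e hs.toFinset) = e ks.toFinset :=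
    eval_self ha hadag ks hs p3 p4
  rw [← hJH] at e3
  rw [e1] at e3
  exact eq_of_pairwise_lt is ks p1 p3 (e_inj e3)

end
end

section
/- For every X ∈ 𝔄_m and every α ∈ ℂ one has ‖X + α I‖ ≥ |α| in operator norm on F_m; consequently the identity operator I does not belong to 𝔄_m. -/
open scoped InnerProductSpace ComplexOrder
open ContinuousLinearMap Filter

noncomputable section

/-- Forms of positive length: λ-forms with `m + n > 0`, together with all π-forms
(which have length `m + n + 2 > 0`). -/
def IsPositiveLengthForm (a adag : ℤ → (Fm →L[ℂ] Fm)) (X : Fm →L[ℂ] Fm) : Prop :=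
  (∃ is js : List ℤ, is.Chain' (· < ·) ∧ js.Chain' (· > ·) ∧ is ++ js ≠ [] ∧
    X = (is.map adag).prod * (js.map a).prod) ∨ IsPiForm a adag X

/-- `𝔄_m`: the norm closure in `B(F_m)` of the linear span of all λ-forms and π-forms
of positive length. -/
def Am (a adag : ℤ → (Fm →L[ℂ] Fm)) : Set (Fm →L[ℂ] Fm) :=
  closure (Submodule.span ℂ
    {X : Fm →L[ℂ] Fm | IsPositiveLengthForm a adag X} : Set (Fm →L[ℂ] Fm))

lemma e_norm (A : Finset ℤ) : ‖e A‖ = 1 := by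
  have := lp.norm_single (p := 2) (E := fun _ : Finset ℤ => ℂ)
    (by norm_num) A (1 : ℂ)
  simpa [e] using this

lemma prod_apply_eq_zero (f : ℤ → (Fm →L[ℂ] Fm)) (x : Fm) :
    ∀ (l : List ℤ), (∀ i ∈ l, f i x = 0) → l ≠ [] → (l.map f).prod x = 0 := by
  intro l
  induction l with
  | nil => simp
  | cons i rest ih =>
    intro h _
    rcases eq_or_ne rest [] with h0 | h0
    · subst h0; simpa using h i (by simp)
    · simp only [List.map_cons, List.prod_cons, ContinuousLinearMap.mul_apply]
      rw [ih (fun j hj => h j (List.mem_cons_of_mem _ hj)) h0, map_zero]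

lemma exists_lt_of_list (l : List ℤ) : ∃ M : ℤ, ∀ i ∈ l, M < i := by
  induction l with
  | nil => exact ⟨0, by simp⟩
  | cons i rest ih =>
    obtain ⟨M, hM⟩ := ih
    refine ⟨min M (i - 1), fun j hj => ?_⟩
    rcases List.mem_cons.mp hj with rfl | h
    · exact lt_of_le_of_lt (min_le_right _ _) (by omega)
    · exact lt_of_le_of_lt (min_le_left _ _) (hM j h)

lemma kills_eventually (a adag : ℤ → (Fm →L[ℂ] Fm))
    (ha : AnnihilatesOn a) (hadag : CreatesOn adag)
    (X : Fm →L[ℂ] Fm) (hX : IsPositiveLengthForm a adag X) :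
    ∃ M : ℤ, ∀ m ≤ M, X (e {m}) = 0 := by
  have ha0 : ∀ i m : ℤ, m < i → a i (e {m}) = 0 := by
    intro i m him
    rw [ha]
    rw [if_neg]
    rintro ⟨h1, -⟩
    simp only [Finset.mem_singleton] at h1
    omega
  have hadag0 : ∀ i m : ℤ, m < i → adag i (e {m}) = 0 := by
    intro i m him
    rw [hadag]
    rw [if_neg]
    intro h
    have := h m (by simp)
    omega
  rcases hX with ⟨is, js, -, -, hne, hXeq⟩ | ⟨is, js, k, -, -, -, -, hXeq⟩
  · obtain ⟨M, hM⟩ := exists_lt_of_list (is ++ js)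
    refine ⟨M, fun m hm => ?_⟩
    rcases eq_or_ne js [] with h0 | h0
    · subst h0
      have his : is ≠ [] := by simpa using hne
      rw [hXeq]
      simp only [List.map_nil, List.prod_nil, mul_one]
      exact prod_apply_eq_zero adag _ is
        (fun i hi => hadag0 i m (lt_of_le_of_lt hm (hM i (by simp [hi])))) his
    · rw [hXeq, ContinuousLinearMap.mul_apply,
        prod_apply_eq_zero a _ js
          (fun j hj => ha0 j m (lt_of_le_of_lt hm (hM j (by simp [hj])))) h0,
        map_zero]
  · obtain ⟨M, hM⟩ := exists_lt_of_list (js ++ [k])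
    refine ⟨M, fun m hm => ?_⟩
    rcases eq_or_ne js [] with h0 | h0
    · subst h0
      rw [hXeq]
      simp only [List.map_nil, List.prod_nil, mul_one, ContinuousLinearMap.mul_apply]
      rw [hadag0 k m (lt_of_le_of_lt hm (hM k (by simp))), map_zero, map_zero]
    · rw [hXeq, ContinuousLinearMap.mul_apply,
        prod_apply_eq_zero a _ js
          (fun j hj => ha0 j m (lt_of_le_of_lt hm (hM j (by simp [hj])))) h0,
        map_zero]

/-- Proposition 4.6 (Proposition `ide`): for every `X ∈ 𝔄_m` and every `α ∈ ℂ` one has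
`‖X + α I‖ ≥ |α|`; consequently the identity `I` does not belong to `𝔄_m`. -/
theorem norm_add_smul_one_ge_of_mem_Am
    (a adag : ℤ → (Fm →L[ℂ] Fm))
    (ha : AnnihilatesOn a) (hadag : CreatesOn adag) :
    (∀ X ∈ Am a adag, ∀ α : ℂ, ‖α‖ ≤ ‖X + α • (1 : Fm →L[ℂ] Fm)‖) ∧
    (1 : Fm →L[ℂ] Fm) ∉ Am a adag := by
  have key : ∀ Y ∈ (Submodule.span ℂ
      {X : Fm →L[ℂ] Fm | IsPositiveLengthForm a adag X}),
      ∃ M : ℤ, ∀ m ≤ M, Y (e {m}) = 0 := by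
    intro Y hY
    induction hY using Submodule.span_induction with
    | mem X hX => exact kills_eventually a adag ha hadag X hX
    | zero => exact ⟨0, fun m _ => rfl⟩
    | add X Y _ _ hX hY =>
      obtain ⟨M1, h1⟩ := hX
      obtain ⟨M2, h2⟩ := hY
      exact ⟨min M1 M2, fun m hm => by
        simp [ContinuousLinearMap.add_apply,
          h1 m (le_trans hm (min_le_left _ _)), h2 m (le_trans hm (min_le_right _ _))]⟩
    | smul c X _ hX =>
      obtain ⟨M, hM⟩ := hX
      exact ⟨M, fun m hm => by simp [hM m hm]⟩
  have main : ∀ X ∈ Am a adag, ∀ α : ℂ, ‖α‖ ≤ ‖X + α • (1 : Fm →L[ℂ] Fm)‖ := by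
    intro X hX α
    have hclosed : IsClosed {Y : Fm →L[ℂ] Fm | ‖α‖ ≤ ‖Y + α • (1 : Fm →L[ℂ] Fm)‖} :=
      isClosed_le continuous_const ((continuous_id.add continuous_const).norm)
    have hsub : (Submodule.span ℂ
        {X : Fm →L[ℂ] Fm | IsPositiveLengthForm a adag X} : Set (Fm →L[ℂ] Fm)) ⊆
        {Y : Fm →L[ℂ] Fm | ‖α‖ ≤ ‖Y + α • (1 : Fm →L[ℂ] Fm)‖} := by
      intro Y hY
      obtain ⟨M, hM⟩ := key Y hY
      have happ : (Y + α • (1 : Fm →L[ℂ] Fm)) (e {M}) = α • e {M} := by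
        simp [ContinuousLinearMap.add_apply, hM M le_rfl]
      have := (Y + α • (1 : Fm →L[ℂ] Fm)).le_opNorm (e {M})
      rw [happ, norm_smul, e_norm, mul_one, mul_one] at this
      exact this
    exact closure_minimal hsub hclosed hX
  refine ⟨main, fun h1 => ?_⟩
  have h := main 1 h1 (-1)
  have hz : (1 : Fm →L[ℂ] Fm) + (-1 : ℂ) • 1 = 0 := by
    rw [neg_smul, one_smul]; exact add_neg_cancel 1
  rw [hz, norm_zero] at h
  norm_num at h

end
end

section
/- The monotone creation and annihilation operators act irreducibly on F_m: if T is a bounded operator on F_m satisfying T a_i = a_i T and T a_i† = a_i† T for all i ∈ ℤ, then T = c I for some scalar c ∈ ℂ. -/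
open scoped InnerProductSpace ComplexOrder
open ContinuousLinearMap Filter

noncomputable section

lemma e_hasSum (f : Fm) : HasSum (fun A : Finset ℤ => (f A : ℂ) • e A) f := by
  have h := lp.hasSum_single (E := fun _ : Finset ℤ => ℂ) ENNReal.ofNat_ne_top f
  have : ∀ A : Finset ℤ, lp.single 2 A (f A : ℂ) = (f A : ℂ) • e A := by
    intro A
    have := lp.single_smul (E := fun _ : Finset ℤ => ℂ) 2 A (f A) (1 : ℂ)
    simpa [e] using this
  simpa [this] using h

lemma clm_ext_basis {F : Type*} [NormedAddCommGroup F] [NormedSpace ℂ F]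
    (S R : Fm →L[ℂ] F) (h : ∀ A, S (e A) = R (e A)) : S = R := by
  ext f
  have h1 : HasSum (fun A : Finset ℤ => S ((f A : ℂ) • e A)) (S f) :=
    (e_hasSum f).mapL S
  have h2 : HasSum (fun A : Finset ℤ => S ((f A : ℂ) • e A)) (R f) := by
    have h2' : HasSum (fun A : Finset ℤ => R ((f A : ℂ) • e A)) (R f) :=
      (e_hasSum f).mapL R
    simpa [map_smul, h] using h2'
  exact h1.unique h2

lemma inner_e_left (A : Finset ℤ) (f : Fm) : ⟪e A, f⟫_ℂ = f A := by
  simp [e, lp.inner_single_left]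

lemma inner_e_e (A B : Finset ℤ) : ⟪e A, e B⟫_ℂ = if A = B then 1 else 0 := by
  rw [inner_e_left, e, lp.single_apply]
  by_cases h : A = B <;> simp [h, eq_comm]

/-- Component formula for annihilation operators applied to an arbitrary vector. -/
lemma annih_component {a : ℤ → (Fm →L[ℂ] Fm)} (ha : AnnihilatesOn a)
    (i : ℤ) (B : Finset ℤ) (hB : ∀ j ∈ B, i < j) (x : Fm) :
    (a i x : ∀ _ : Finset ℤ, ℂ) B = x (insert i B) := by
  have key : (innerSL ℂ (e B)).comp (a i) = innerSL ℂ (e (insert i B)) := by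
    apply clm_ext_basis
    intro A
    simp only [ContinuousLinearMap.comp_apply, innerSL_apply_apply, ha i A]
    by_cases hc : i ∈ A ∧ ∀ j ∈ A, i ≤ j
    · rw [if_pos hc, inner_e_e, inner_e_e]
      obtain ⟨hiA, hmin⟩ := hc
      have hAB : B = A.erase i ↔ insert i B = A := by
        constructor
        · rintro rfl; exact Finset.insert_erase hiA
        · rintro rfl
          have hiB : i ∉ B := fun h => lt_irrefl i (hB i h)
          rw [Finset.erase_insert hiB]
      by_cases hb : B = A.erase i
      · rw [if_pos hb, if_pos (hAB.mp hb)]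
      · rw [if_neg hb, if_neg (fun h => hb (hAB.mpr h))]
    · rw [if_neg hc, inner_e_e, inner_zero_right]
      rw [if_neg]
      rintro rfl
      exact hc ⟨Finset.mem_insert_self i B, by
        intro j hj
        rcases Finset.mem_insert.mp hj with rfl | hj
        · exact le_refl _
        · exact (hB j hj).le⟩
  have := congrArg (fun S : Fm →L[ℂ] ℂ => S x) key
  simpa only [ContinuousLinearMap.comp_apply, innerSL_apply_apply, inner_e_left] using this

/-- Proposition 4.7 (irreducibility, Proposition `vncz`): the monotone creation and
annihilation operators act irreducibly on `F_m`: any bounded operator `T` commuting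
with every `a_i` and every `a_i†` is a scalar multiple of the identity. -/
theorem monotone_irreducible
    (a adag : ℤ → (Fm →L[ℂ] Fm))
    (ha : AnnihilatesOn a) (hadag : CreatesOn adag)
    (T : Fm →L[ℂ] Fm)
    (hTa : ∀ i : ℤ, T * a i = a i * T)
    (hTadag : ∀ i : ℤ, T * adag i = adag i * T) :
    ∃ c : ℂ, T = c • (1 : Fm →L[ℂ] Fm) := by
  set c : ℂ := (T (e ∅) : ∀ _ : Finset ℤ, ℂ) ∅ with hc
  refine ⟨c, ?_⟩
  -- Step 1: T Ω = c • Ω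
  have hvac : T (e ∅) = c • e ∅ := by
    apply lp.ext
    funext A
    rcases eq_or_ne A ∅ with rfl | hA
    · simp only [e, lp.coeFn_smul, Pi.smul_apply, lp.single_apply_self, smul_eq_mul, mul_one]
      exact hc.symm
    · obtain ⟨i, hiA⟩ := Finset.nonempty_iff_ne_empty.mpr hA
      set j := A.min' (Finset.nonempty_iff_ne_empty.mpr hA) with hj
      have hjA : j ∈ A := A.min'_mem _
      set B := A.erase j with hB
      have hBlt : ∀ k ∈ B, j < k := by
        intro k hk
        have hkA : k ∈ A := Finset.mem_of_mem_erase hk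
        have hne : k ≠ j := Finset.ne_of_mem_erase hk
        exact lt_of_le_of_ne (A.min'_le k hkA) (Ne.symm hne)
      have hins : insert j B = A := Finset.insert_erase hjA
      have haT : a j (T (e ∅)) = 0 := by
        have h1 : a j (T (e ∅)) = T (a j (e ∅)) := by
          have := congrArg (fun S : Fm →L[ℂ] Fm => S (e ∅)) (hTa j)
          simpa using this.symm
        rw [h1, ha j ∅]
        simp
      have := annih_component ha j B hBlt (T (e ∅))
      rw [haT, hins] at this
      have hz : (T (e ∅) : ∀ _ : Finset ℤ, ℂ) A = 0 := by
        simpa using this.symm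
      rw [hz]
      have : ((c • e ∅ : Fm) : ∀ _ : Finset ℤ, ℂ) A = c * (e ∅ : ∀ _ : Finset ℤ, ℂ) A := by
        simp [lp.coeFn_smul]
      rw [this]
      have h0 : (e ∅ : ∀ _ : Finset ℤ, ℂ) A = 0 :=
        lp.single_apply_ne (E := fun _ : Finset ℤ => ℂ) 2 ∅ (1 : ℂ) hA
      rw [h0, mul_zero]
  -- Step 2: T (e A) = c • e A for all A, by strong induction
  have hall : ∀ A : Finset ℤ, T (e A) = c • e A := by
    intro A
    induction A using Finset.strongInduction with
    | _ A ih =>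
      rcases eq_or_ne A ∅ with rfl | hA
      · exact hvac
      · have hne : A.Nonempty := Finset.nonempty_iff_ne_empty.mpr hA
        set j := A.min' hne with hj
        have hjA : j ∈ A := A.min'_mem _
        set B := A.erase j with hB
        have hBlt : ∀ k ∈ B, j < k := by
          intro k hk
          have hkA : k ∈ A := Finset.mem_of_mem_erase hk
          have hne' : k ≠ j := Finset.ne_of_mem_erase hk
          exact lt_of_le_of_ne (A.min'_le k hkA) (Ne.symm hne')
        have hins : insert j B = A := Finset.insert_erase hjA
        have hBA : B ⊂ A := Finset.erase_ssubset hjA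
        have hcreate : adag j (e B) = e A := by
          rw [hadag j B, if_pos hBlt, hins]
        calc T (e A) = T (adag j (e B)) := by rw [hcreate]
          _ = adag j (T (e B)) := by
              have := congrArg (fun S : Fm →L[ℂ] Fm => S (e B)) (hTadag j)
              simpa using this
          _ = adag j (c • e B) := by rw [ih B hBA]
          _ = c • adag j (e B) := by rw [map_smul]
          _ = c • e A := by rw [hcreate]
  apply clm_ext_basis
  intro A
  rw [hall A]
  simp

end
end

section
/- The monotone C*-algebra decomposes as ℜ_m = 𝔄_m + ℂI: every element of ℜ_m can be written (uniquely) as X + cI with X ∈ 𝔄_m and c ∈ ℂ, and conversely every such sum belongs to ℜ_m. -/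
open scoped InnerProductSpace ComplexOrder
open ContinuousLinearMap Filter

noncomputable section

lemma e_inner (A B : Finset ℤ) : ⟪e A, e B⟫_ℂ = if B = A then 1 else 0 := by
  rw [e, lp.inner_single_left]
  simp only [e, lp.single_apply, RCLike.inner_apply, map_one, one_mul]
  split_ifs with h h2 h2 <;> simp_all

lemma dense_span_e : Dense ((Submodule.span ℂ (Set.range e) : Submodule ℂ Fm) : Set Fm) := by
  intro x
  have h := lp.hasSum_single (E := fun _ : Finset ℤ => ℂ) (p := 2) ENNReal.ofNat_ne_top x
  refine mem_closure_of_tendsto h ?_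
  filter_upwards with s
  refine Submodule.sum_mem _ fun A _ => ?_
  have : lp.single 2 A (x A) = (x A) • e A := by
    rw [e, ← lp.single_smul]
    norm_num
  rw [this]
  exact Submodule.smul_mem _ _ (Submodule.subset_span ⟨A, rfl⟩)

lemma ext_e {E' : Type*} [NormedAddCommGroup E'] [NormedSpace ℂ E'] {T S : Fm →L[ℂ] E'}
    (h : ∀ A, T (e A) = S (e A)) : T = S := by
  have heq : Set.EqOn T S ((Submodule.span ℂ (Set.range e) : Submodule ℂ Fm) : Set Fm) := by
    intro x hx
    induction hx using Submodule.span_induction with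
    | mem x hx => obtain ⟨A, rfl⟩ := hx; exact h A
    | zero => simp
    | add x y _ _ hx hy => simp [hx, hy]
    | smul c x _ hx => simp [hx]
  exact ContinuousLinearMap.ext fun x =>
    (heq.closure T.continuous S.continuous) (dense_span_e x)

section Ops
variable {a adag : ℤ → (Fm →L[ℂ] Fm)} (ha : AnnihilatesOn a) (hadag : CreatesOn adag)
include ha hadag

lemma Pk_apply (k : ℤ) (A : Finset ℤ) :
    (a k * adag k) (e A) = if ∀ j ∈ A, k < j then e A else 0 := by
  rw [ContinuousLinearMap.mul_apply, hadag]
  split_ifs with h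
  · rw [ha, if_pos, Finset.erase_insert]
    · exact fun hk => absurd (h k hk) (lt_irrefl k)
    · refine ⟨Finset.mem_insert_self _ _, fun j hj => ?_⟩
      rcases Finset.mem_insert.1 hj with rfl | hj
      · exact le_rfl
      · exact le_of_lt (h j hj)
  · simp

lemma opI1 {p q : ℤ} (h : q ≤ p) : adag p * adag q = 0 := by
  apply ext_e; intro A
  rw [ContinuousLinearMap.mul_apply, hadag]
  split_ifs with h1
  · rw [hadag, if_neg, ContinuousLinearMap.zero_apply]
    exact fun hall => absurd (hall q (Finset.mem_insert_self _ _)) (not_lt.2 h)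
  · simp

lemma opI2 {p q : ℤ} (h : p ≤ q) : a p * a q = 0 := by
  apply ext_e; intro A
  rw [ContinuousLinearMap.mul_apply, ha]
  split_ifs with h1
  · rw [ha, if_neg, ContinuousLinearMap.zero_apply]
    rintro ⟨hp, -⟩
    obtain ⟨hpq, hpA⟩ := Finset.mem_erase.1 hp
    exact hpq (le_antisymm h (h1.2 p hpA))
  · simp

lemma opI3 {p q : ℤ} (h : p ≠ q) : a p * adag q = 0 := by
  apply ext_e; intro A
  rw [ContinuousLinearMap.mul_apply, hadag]
  split_ifs with h1
  · rw [ha, if_neg, ContinuousLinearMap.zero_apply]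
    rintro ⟨hp, hle⟩
    have h2 : p ≤ q := hle q (Finset.mem_insert_self _ _)
    rcases Finset.mem_insert.1 hp with rfl | hpA
    · exact h rfl
    · exact absurd (h1 p hpA) (not_lt.2 h2)
  · simp

lemma opI5 {p k : ℤ} (h : k ≤ p) : adag p * (a k * adag k) = adag p := by
  apply ext_e; intro A
  rw [ContinuousLinearMap.mul_apply, Pk_apply ha hadag]
  split_ifs with h1
  · rfl
  · rw [map_zero, hadag, eq_comm, if_neg]
    exact fun hall => h1 fun j hj => lt_of_le_of_lt h (hall j hj)

lemma opI6 {q k : ℤ} (h : k < q) : (a k * adag k) * adag q = adag q := by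
  apply ext_e; intro A
  rw [ContinuousLinearMap.mul_apply, hadag]
  split_ifs with h1
  · rw [Pk_apply ha hadag, if_pos]
    intro j hj
    rcases Finset.mem_insert.1 hj with rfl | hj
    · exact h
    · exact lt_trans h (h1 j hj)
  · simp

lemma opI7 {p k : ℤ} (h : k < p) : a p * (a k * adag k) = a p := by
  apply ext_e; intro A
  rw [ContinuousLinearMap.mul_apply, Pk_apply ha hadag]
  split_ifs with h1
  · rfl
  · rw [map_zero, ha, eq_comm, if_neg]
    rintro ⟨hp, hle⟩
    exact h1 fun j hj => lt_of_lt_of_le h (hle j hj)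

lemma opI7' {p k : ℤ} (h : p ≤ k) : a p * (a k * adag k) = 0 := by
  apply ext_e; intro A
  rw [ContinuousLinearMap.mul_apply, Pk_apply ha hadag]
  split_ifs with h1
  · rw [ha, if_neg, ContinuousLinearMap.zero_apply]
    rintro ⟨hp, -⟩
    exact absurd (h1 p hp) (not_lt.2 h)
  · simp

lemma opI8 {q k : ℤ} (h : k ≤ q) : (a k * adag k) * a q = a q := by
  apply ext_e; intro A
  rw [ContinuousLinearMap.mul_apply, ha]
  split_ifs with h1
  · rw [Pk_apply ha hadag, if_pos]
    intro j hj
    obtain ⟨hjq, hjA⟩ := Finset.mem_erase.1 hj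
    exact lt_of_le_of_lt h (lt_of_le_of_ne (h1.2 j hjA) (Ne.symm hjq))
  · simp

lemma opI9 {p k : ℤ} (h : p ≤ k) : (a p * adag p) * (a k * adag k) = a k * adag k := by
  apply ext_e; intro A
  rw [ContinuousLinearMap.mul_apply, Pk_apply ha hadag]
  split_ifs with h1
  · rw [Pk_apply ha hadag, if_pos]
    exact fun j hj => lt_of_le_of_lt h (h1 j hj)
  · simp

lemma star_a_eq (p : ℤ) : star (a p) = adag p := by
  have h0 : ∀ A B : Finset ℤ, ⟪(adag p) (e A), e B⟫_ℂ = ⟪e A, (a p) (e B)⟫_ℂ := by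
    intro A B
    rw [hadag, ha]
    split_ifs with h1 h2 h2
    · rw [e_inner, e_inner]
      by_cases hB : B = insert p A
      · rw [if_pos hB, if_pos]
        rw [hB, Finset.erase_insert]
        exact fun hp => absurd (h1 p hp) (lt_irrefl p)
      · rw [if_neg hB, if_neg]
        intro hBe
        exact hB (by rw [← hBe, Finset.insert_erase h2.1])
    · rw [inner_zero_right, e_inner, if_neg]
      rintro rfl
      refine h2 ⟨Finset.mem_insert_self _ _, fun j hj => ?_⟩
      rcases Finset.mem_insert.1 hj with rfl | hj
      · exact le_rfl
      · exact le_of_lt (h1 j hj)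
    · rw [inner_zero_left, e_inner, eq_comm, if_neg]
      rintro rfl
      refine h1 fun j hj => ?_
      obtain ⟨hjp, hjB⟩ := Finset.mem_erase.1 hj
      exact lt_of_le_of_ne (h2.2 j hjB) (Ne.symm hjp)
    · rw [inner_zero_left, inner_zero_right]
  have h1 : ∀ (A : Finset ℤ) (y : Fm), ⟪(adag p) (e A), y⟫_ℂ = ⟪e A, (a p) y⟫_ℂ := by
    intro A
    have := ext_e (T := (innerSL ℂ ((adag p) (e A)))) (S := (innerSL ℂ (e A)).comp (a p))
      (fun B => h0 A B)
    intro y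
    exact congrFun (congrArg DFunLike.coe this) y
  have h2 : ∀ (x y : Fm), ⟪(adag p) x, y⟫_ℂ = ⟪x, (a p) y⟫_ℂ := by
    intro x y
    have := ext_e (T := (innerSL ℂ y).comp (adag p)) (S := innerSL ℂ ((a p) y))
      (fun A => by
        simp only [ContinuousLinearMap.coe_comp', Function.comp_apply, innerSL_apply_apply]
        rw [← inner_conj_symm, h1 A y, inner_conj_symm])
    have hx := congrFun (congrArg DFunLike.coe this) x
    simp only [ContinuousLinearMap.coe_comp', Function.comp_apply, innerSL_apply_apply] at hx
    rw [← inner_conj_symm, hx, inner_conj_symm]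
  rw [ContinuousLinearMap.star_eq_adjoint]
  exact ((ContinuousLinearMap.eq_adjoint_iff (adag p) (a p)).2 h2).symm

lemma star_adag_eq (p : ℤ) : star (adag p) = a p := by
  rw [← star_a_eq ha hadag, star_star]

end Ops

/-- `ℜ_m`: the monotone C*-algebra, i.e. the norm closure of the unital *-subalgebra
of `B(F_m)` generated by the monotone annihilators `{a_i : i ∈ ℤ}`. -/
def Rm (a : ℤ → (Fm →L[ℂ] Fm)) : Set (Fm →L[ℂ] Fm) :=
  closure (StarAlgebra.adjoin ℂ (Set.range a) : Set (Fm →L[ℂ] Fm))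

def VV (a adag : ℤ → (Fm →L[ℂ] Fm)) : Submodule ℂ (Fm →L[ℂ] Fm) :=
  Submodule.span ℂ (insert 1 {X : Fm →L[ℂ] Fm | IsPositiveLengthForm a adag X})

section FormLemmas
variable {a adag : ℤ → (Fm →L[ℂ] Fm)} (ha : AnnihilatesOn a) (hadag : CreatesOn adag)

lemma form_mem_VV {X : Fm →L[ℂ] Fm} (h : IsPositiveLengthForm a adag X) : X ∈ VV a adag :=
  Submodule.subset_span (Set.mem_insert_of_mem _ h)

lemma one_mem_VV : (1 : Fm →L[ℂ] Fm) ∈ VV a adag :=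
  Submodule.subset_span (Set.mem_insert _ _)

lemma lam_mem (is js : List ℤ) (h1 : is.Chain' (· < ·)) (h2 : js.Chain' (· > ·))
    (hne : is ++ js ≠ []) : (is.map adag).prod * (js.map a).prod ∈ VV a adag :=
  form_mem_VV (Or.inl ⟨is, js, h1, h2, hne, rfl⟩)

lemma pi_mem (is js : List ℤ) (k : ℤ) (h1 : is.Chain' (· < ·)) (h2 : js.Chain' (· > ·))
    (h3 : ∀ i ∈ is, i < k) (h4 : ∀ j ∈ js, j < k) :
    (is.map adag).prod * (a k * adag k) * (js.map a).prod ∈ VV a adag :=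
  form_mem_VV (Or.inr ⟨is, js, k, h1, h2, h3, h4, rfl⟩)

lemma gt_of_chain' {j : ℤ} {u : List ℤ} (h : List.Chain' (· > ·) (j :: u)) :
    ∀ x ∈ u, x < j := by
  replace h := List.isChain_iff_pairwise.1 h
  exact fun x hx => (List.pairwise_cons.1 h).1 x hx

include ha hadag

lemma opI5l {p k : ℤ} (h : k ≤ p) : adag p * a k * adag k = adag p := by
  rw [mul_assoc]; exact opI5 ha hadag h

lemma opI7l {p k : ℤ} (h : k < p) : a p * a k * adag k = a p := by
  rw [mul_assoc]; exact opI7 ha hadag h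

lemma gen_adag {X : Fm →L[ℂ] Fm} (hX : IsPositiveLengthForm a adag X) (p : ℤ) :
    adag p * X ∈ VV a adag := by
  rcases hX with ⟨is, js, hci, hcj, hne, rfl⟩ | ⟨is, js, k, hci, hcj, hik, hjk, rfl⟩
  · cases is with
    | nil =>
        have key : adag p * ((List.map adag []).prod * (js.map a).prod)
            = (List.map adag [p]).prod * (js.map a).prod := by
          simp [mul_assoc]
        rw [key]
        exact lam_mem [p] js (List.isChain_singleton p) hcj (by simp)
    | cons i t =>
        by_cases hpi : p < i
        · have key : adag p * ((List.map adag (i :: t)).prod * (js.map a).prod)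
              = (List.map adag (p :: i :: t)).prod * (js.map a).prod := by
            simp [List.prod_cons, mul_assoc]
          rw [key]
          exact lam_mem _ _ (List.isChain_cons_cons.2 ⟨hpi, hci⟩) hcj (by simp)
        · have key : adag p * ((List.map adag (i :: t)).prod * (js.map a).prod) = 0 := by
            simp only [List.map_cons, List.prod_cons, ← mul_assoc,
              opI1 ha hadag (not_lt.1 hpi), zero_mul]
          rw [key]; exact zero_mem _
  · cases is with
    | nil =>
        by_cases hpk : p < k
        · have key : adag p * ((List.map adag []).prod * (a k * adag k) * (js.map a).prod)
              = (List.map adag [p]).prod * (a k * adag k) * (js.map a).prod := by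
            simp only [List.map_cons, List.map_nil, List.prod_cons, List.prod_nil,
              one_mul, mul_one, ← mul_assoc]
          rw [key]
          exact pi_mem [p] js k (List.isChain_singleton p) hcj (by simpa) hjk
        · have key : adag p * ((List.map adag []).prod * (a k * adag k) * (js.map a).prod)
              = (List.map adag [p]).prod * (js.map a).prod := by
            simp only [List.map_cons, List.map_nil, List.prod_cons, List.prod_nil,
              one_mul, mul_one, ← mul_assoc, opI5l ha hadag (not_lt.1 hpk)]
          rw [key]
          exact lam_mem [p] js (List.isChain_singleton p) hcj (by simp)
    | cons i t =>
        by_cases hpi : p < i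
        · have key : adag p * ((List.map adag (i :: t)).prod * (a k * adag k) * (js.map a).prod)
              = (List.map adag (p :: i :: t)).prod * (a k * adag k) * (js.map a).prod := by
            simp only [List.map_cons, List.prod_cons, ← mul_assoc]
          rw [key]
          refine pi_mem _ _ _ (List.isChain_cons_cons.2 ⟨hpi, hci⟩) hcj ?_ hjk
          intro x hx
          rcases List.mem_cons.1 hx with rfl | hx
          · exact lt_trans hpi (hik i (List.mem_cons_self))
          · exact hik x hx
        · have key : adag p * ((List.map adag (i :: t)).prod * (a k * adag k) * (js.map a).prod)
              = 0 := by
            simp only [List.map_cons, List.prod_cons, ← mul_assoc,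
              opI1 ha hadag (not_lt.1 hpi), zero_mul]
          rw [key]; exact zero_mem _

lemma gen_a {X : Fm →L[ℂ] Fm} (hX : IsPositiveLengthForm a adag X) (p : ℤ) :
    a p * X ∈ VV a adag := by
  rcases hX with ⟨is, js, hci, hcj, hne, rfl⟩ | ⟨is, js, k, hci, hcj, hik, hjk, rfl⟩
  · cases is with
    | nil =>
        cases js with
        | nil => exact absurd rfl hne
        | cons j u =>
            by_cases hjp : j < p
            · have key : a p * ((List.map adag []).prod * ((j :: u).map a).prod)
                  = (List.map adag []).prod * ((p :: j :: u).map a).prod := by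
                simp [List.prod_cons, mul_assoc]
              rw [key]
              exact lam_mem [] _ List.isChain_nil (List.isChain_cons_cons.2 ⟨hjp, hcj⟩) (by simp)
            · have key : a p * ((List.map adag []).prod * ((j :: u).map a).prod) = 0 := by
                simp only [List.map_cons, List.map_nil, List.prod_cons, List.prod_nil,
                  one_mul, ← mul_assoc, opI2 ha hadag (not_lt.1 hjp), zero_mul]
              rw [key]; exact zero_mem _
    | cons i t =>
        by_cases hpi : p = i
        · subst hpi
          cases t with
          | nil =>
              cases js with
              | nil =>
                  have key : a p * ((List.map adag [p]).prod * (List.map a []).prod)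
                      = (List.map adag []).prod * (a p * adag p) * (List.map a []).prod := by
                    simp [List.prod_cons, mul_assoc]
                  rw [key]
                  exact pi_mem [] [] p List.isChain_nil List.isChain_nil (by simp) (by simp)
              | cons j u =>
                  by_cases hpj : p ≤ j
                  · have key : a p * ((List.map adag [p]).prod * ((j :: u).map a).prod)
                        = (List.map adag []).prod * ((j :: u).map a).prod := by
                      simp only [List.map_cons, List.map_nil, List.prod_cons, List.prod_nil,
                        one_mul, mul_one, ← mul_assoc, opI8 ha hadag hpj]
                    rw [key]
                    exact lam_mem [] (j :: u) List.isChain_nil hcj (by simp)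
                  · have key : a p * ((List.map adag [p]).prod * ((j :: u).map a).prod)
                        = (List.map adag []).prod * (a p * adag p) * ((j :: u).map a).prod := by
                      simp only [List.map_cons, List.map_nil, List.prod_cons, List.prod_nil,
                        one_mul, mul_one, ← mul_assoc]
                    rw [key]
                    refine pi_mem [] (j :: u) p List.isChain_nil hcj (by simp) ?_
                    intro x hx
                    rcases List.mem_cons.1 hx with rfl | hx
                    · exact not_le.1 hpj
                    · exact lt_trans (gt_of_chain' hcj x hx) (not_le.1 hpj)
          | cons i2 t' =>
              have hpi2 : p < i2 := (List.isChain_cons_cons.1 hci).1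
              have key : a p * ((List.map adag (p :: i2 :: t')).prod * (js.map a).prod)
                  = (List.map adag (i2 :: t')).prod * (js.map a).prod := by
                simp only [List.map_cons, List.prod_cons, ← mul_assoc,
                  opI6 ha hadag hpi2]
              rw [key]
              exact lam_mem (i2 :: t') js hci.tail hcj (by simp)
        · have key : a p * ((List.map adag (i :: t)).prod * (js.map a).prod) = 0 := by
            simp only [List.map_cons, List.prod_cons, ← mul_assoc,
              opI3 ha hadag hpi, zero_mul]
          rw [key]; exact zero_mem _
  · cases is with
    | nil =>
        by_cases hkp : k < p
        · cases js with
          | nil =>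
              have key : a p * ((List.map adag []).prod * (a k * adag k) * (List.map a []).prod)
                  = (List.map adag []).prod * (List.map a [p]).prod := by
                simp only [List.map_cons, List.map_nil, List.prod_cons, List.prod_nil,
                  one_mul, mul_one, ← mul_assoc, opI7l ha hadag hkp]
              rw [key]
              exact lam_mem [] [p] List.isChain_nil (List.isChain_singleton p) (by simp)
          | cons j u =>
              have key : a p * ((List.map adag []).prod * (a k * adag k) * ((j :: u).map a).prod)
                  = (List.map adag []).prod * ((p :: j :: u).map a).prod := by
                simp only [List.map_cons, List.map_nil, List.prod_cons, List.prod_nil,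
                  one_mul, mul_one, ← mul_assoc, opI7l ha hadag hkp]
              rw [key]
              exact lam_mem [] (p :: j :: u) List.isChain_nil
                (List.isChain_cons_cons.2 ⟨lt_trans (hjk j (List.mem_cons_self)) hkp, hcj⟩) (by simp)
        · have key : a p * ((List.map adag []).prod * (a k * adag k) * (js.map a).prod) = 0 := by
            simp only [List.map_cons, List.map_nil, List.prod_cons, List.prod_nil,
              one_mul, mul_one, ← mul_assoc, opI2 ha hadag (not_lt.1 hkp), zero_mul]
          rw [key]; exact zero_mem _
    | cons i t =>
        by_cases hpi : p = i
        · subst hpi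
          cases t with
          | nil =>
              have hpk : p ≤ k := le_of_lt (hik p (List.mem_cons_self))
              have key : a p * ((List.map adag [p]).prod * (a k * adag k) * (js.map a).prod)
                  = (List.map adag []).prod * (a k * adag k) * (js.map a).prod := by
                simp only [List.map_cons, List.map_nil, List.prod_cons, List.prod_nil,
                  one_mul, mul_one, ← mul_assoc, opI8 ha hadag hpk]
              rw [key]
              exact pi_mem [] js k List.isChain_nil hcj (by simp) hjk
          | cons i2 t' =>
              have hpi2 : p < i2 := (List.isChain_cons_cons.1 hci).1
              have key : a p * ((List.map adag (p :: i2 :: t')).prod * (a k * adag k)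
                    * (js.map a).prod)
                  = (List.map adag (i2 :: t')).prod * (a k * adag k) * (js.map a).prod := by
                simp only [List.map_cons, List.prod_cons, ← mul_assoc,
                  opI6 ha hadag hpi2]
              rw [key]
              exact pi_mem (i2 :: t') js k hci.tail hcj
                (fun x hx => hik x (List.mem_cons_of_mem _ hx)) hjk
        · have key : a p * ((List.map adag (i :: t)).prod * (a k * adag k) * (js.map a).prod)
              = 0 := by
            simp only [List.map_cons, List.prod_cons, ← mul_assoc,
              opI3 ha hadag hpi, zero_mul]
          rw [key]; exact zero_mem _

lemma gen_mem (p : ℤ) {v : Fm →L[ℂ] Fm} (hv : v ∈ VV a adag) :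
    a p * v ∈ VV a adag ∧ adag p * v ∈ VV a adag := by
  induction hv using Submodule.span_induction with
  | mem x hx =>
      rcases hx with rfl | hx
      · constructor
        · rw [mul_one]
          exact form_mem_VV (Or.inl ⟨[], [p], List.isChain_nil, List.isChain_singleton p,
            by simp, by simp⟩)
        · rw [mul_one]
          exact form_mem_VV (Or.inl ⟨[p], [], List.isChain_singleton p, List.isChain_nil,
            by simp, by simp⟩)
      · exact ⟨gen_a ha hadag hx p, gen_adag ha hadag hx p⟩
  | zero => constructor <;> · rw [mul_zero]; exact zero_mem _
  | add x y _ _ ihx ihy =>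
      exact ⟨by rw [mul_add]; exact add_mem ihx.1 ihy.1,
             by rw [mul_add]; exact add_mem ihx.2 ihy.2⟩
  | smul c x _ ihx =>
      exact ⟨by rw [mul_smul_comm]; exact Submodule.smul_mem _ _ ihx.1,
             by rw [mul_smul_comm]; exact Submodule.smul_mem _ _ ihx.2⟩

lemma word_mul_mem (L : List (Fm →L[ℂ] Fm))
    (hL : ∀ g ∈ L, (∃ p, g = a p) ∨ (∃ p, g = adag p)) {v : Fm →L[ℂ] Fm}
    (hv : v ∈ VV a adag) : L.prod * v ∈ VV a adag := by
  induction L with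
  | nil => simpa
  | cons g t ih =>
      rw [List.prod_cons, mul_assoc]
      have hv' := ih (fun g' hg' => hL g' (List.mem_cons_of_mem _ hg'))
      rcases hL g (List.mem_cons_self) with ⟨p, rfl⟩ | ⟨p, rfl⟩
      · exact (gen_mem ha hadag p hv').1
      · exact (gen_mem ha hadag p hv').2

omit ha hadag in
lemma form_word {X : Fm →L[ℂ] Fm} (hX : IsPositiveLengthForm a adag X) :
    ∃ L : List (Fm →L[ℂ] Fm), (∀ g ∈ L, (∃ p, g = a p) ∨ (∃ p, g = adag p)) ∧ X = L.prod := by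
  rcases hX with ⟨is, js, _, _, _, rfl⟩ | ⟨is, js, k, _, _, _, _, rfl⟩
  · refine ⟨is.map adag ++ js.map a, ?_, by rw [List.prod_append]⟩
    intro g hg
    rcases List.mem_append.1 hg with hg | hg
    · obtain ⟨p, -, rfl⟩ := List.mem_map.1 hg; exact Or.inr ⟨p, rfl⟩
    · obtain ⟨p, -, rfl⟩ := List.mem_map.1 hg; exact Or.inl ⟨p, rfl⟩
  · refine ⟨is.map adag ++ [a k, adag k] ++ js.map a, ?_, ?_⟩
    · intro g hg
      rcases List.mem_append.1 hg with hg | hg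
      · rcases List.mem_append.1 hg with hg | hg
        · obtain ⟨p, -, rfl⟩ := List.mem_map.1 hg; exact Or.inr ⟨p, rfl⟩
        · rcases List.mem_cons.1 hg with rfl | hg
          · exact Or.inl ⟨k, rfl⟩
          · rcases List.mem_cons.1 hg with rfl | hg
            · exact Or.inr ⟨k, rfl⟩
            · exact absurd hg List.not_mem_nil
      · obtain ⟨p, -, rfl⟩ := List.mem_map.1 hg; exact Or.inl ⟨p, rfl⟩
    · rw [List.prod_append, List.prod_append]
      simp [List.prod_cons, mul_assoc]

lemma VV_mul {x y : Fm →L[ℂ] Fm} (hx : x ∈ VV a adag) (hy : y ∈ VV a adag) :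
    x * y ∈ VV a adag := by
  induction hx using Submodule.span_induction with
  | mem x hx =>
      rcases hx with rfl | hx
      · rwa [one_mul]
      · obtain ⟨L, hL, rfl⟩ := form_word hx
        exact word_mul_mem ha hadag L hL hy
  | zero => rw [zero_mul]; exact zero_mem _
  | add x₁ x₂ _ _ ih1 ih2 => rw [add_mul]; exact add_mem ih1 ih2
  | smul c x₁ _ ih => rw [smul_mul_assoc]; exact Submodule.smul_mem _ _ ih

lemma star_prod_a (l : List ℤ) : star ((l.map a).prod) = (l.reverse.map adag).prod := by
  induction l with
  | nil => simp
  | cons j t ih =>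
      rw [List.map_cons, List.prod_cons, star_mul, ih,
        List.reverse_cons, List.map_append, List.prod_append]
      simp [star_a_eq ha hadag]

lemma star_prod_adag (l : List ℤ) : star ((l.map adag).prod) = (l.reverse.map a).prod := by
  induction l with
  | nil => simp
  | cons j t ih =>
      rw [List.map_cons, List.prod_cons, star_mul, ih,
        List.reverse_cons, List.map_append, List.prod_append]
      simp [star_adag_eq ha hadag]

omit ha hadag in
lemma chain_rev_gt {l : List ℤ} (h : List.Chain' (· > ·) l) :
    List.Chain' (· < ·) l.reverse := by
  refine List.isChain_reverse.2 ?_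
  exact h

omit ha hadag in
lemma chain_rev_lt {l : List ℤ} (h : List.Chain' (· < ·) l) :
    List.Chain' (· > ·) l.reverse := by
  refine List.isChain_reverse.2 ?_
  exact h

lemma star_form {X : Fm →L[ℂ] Fm} (hX : IsPositiveLengthForm a adag X) :
    IsPositiveLengthForm a adag (star X) := by
  rcases hX with ⟨is, js, hci, hcj, hne, rfl⟩ | ⟨is, js, k, hci, hcj, hik, hjk, rfl⟩
  · refine Or.inl ⟨js.reverse, is.reverse, chain_rev_gt hcj, chain_rev_lt hci, ?_, ?_⟩
    · intro h
      rcases List.append_eq_nil_iff.1 h with ⟨h1, h2⟩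
      exact hne (by rw [List.reverse_eq_nil_iff.1 h1, List.reverse_eq_nil_iff.1 h2]; rfl)
    · rw [star_mul, star_prod_a ha hadag, star_prod_adag ha hadag]
  · refine Or.inr ⟨js.reverse, is.reverse, k, chain_rev_gt hcj, chain_rev_lt hci,
      fun x hx => hjk x (List.mem_reverse.1 hx), fun x hx => hik x (List.mem_reverse.1 hx), ?_⟩
    rw [star_mul, star_mul, star_mul, star_a_eq ha hadag, star_adag_eq ha hadag,
      star_prod_a ha hadag, star_prod_adag ha hadag, ← mul_assoc]

lemma VV_star {x : Fm →L[ℂ] Fm} (hx : x ∈ VV a adag) : star x ∈ VV a adag := by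
  induction hx using Submodule.span_induction with
  | mem x hx =>
      rcases hx with rfl | hx
      · rw [star_one]; exact one_mem_VV
      · exact form_mem_VV (star_form ha hadag hx)
  | zero => rw [star_zero]; exact zero_mem _
  | add x₁ x₂ _ _ ih1 ih2 => rw [star_add]; exact add_mem ih1 ih2
  | smul c x₁ _ ih =>
      rw [star_smul]
      exact Submodule.smul_mem _ _ ih

lemma adjoin_sub_VV {x : Fm →L[ℂ] Fm} (hx : x ∈ StarAlgebra.adjoin ℂ (Set.range a)) :
    x ∈ VV a adag := by
  induction hx using StarAlgebra.adjoin_induction with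
  | mem x hx =>
      obtain ⟨i, rfl⟩ := hx
      exact form_mem_VV (Or.inl ⟨[], [i], List.isChain_nil, List.isChain_singleton i,
        by simp, by simp⟩)
  | algebraMap r =>
      rw [Algebra.algebraMap_eq_smul_one]
      exact Submodule.smul_mem _ _ one_mem_VV
  | add x y _ _ ihx ihy => exact add_mem ihx ihy
  | mul x y _ _ ihx ihy => exact VV_mul ha hadag ihx ihy
  | star x _ ihx => exact VV_star ha hadag ihx

lemma form_mem_adjoin {X : Fm →L[ℂ] Fm} (hX : IsPositiveLengthForm a adag X) :
    X ∈ StarAlgebra.adjoin ℂ (Set.range a) := by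
  obtain ⟨L, hL, rfl⟩ := form_word hX
  refine list_prod_mem ?_
  intro g hg
  rcases hL g hg with ⟨p, rfl⟩ | ⟨p, rfl⟩
  · exact StarAlgebra.subset_adjoin ℂ _ ⟨p, rfl⟩
  · rw [← star_a_eq ha hadag]
    exact star_mem (StarAlgebra.subset_adjoin ℂ _ ⟨p, rfl⟩)

end FormLemmas

open scoped Topology

section Psi
variable {a adag : ℤ → (Fm →L[ℂ] Fm)} (ha : AnnihilatesOn a) (hadag : CreatesOn adag)

lemma list_lt_eventually (l : List ℤ) : ∀ᶠ n : ℤ in atBot, ∀ j ∈ l, n < j := by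
  induction l with
  | nil => filter_upwards with n j hj; exact absurd hj List.not_mem_nil
  | cons j t ih =>
      filter_upwards [eventually_lt_atBot j, ih] with n h1 h2 x hx
      rcases List.mem_cons.1 hx with rfl | hx
      · exact h1
      · exact h2 x hx

include ha in
lemma prodA_vanish (l : List ℤ) (hl : l ≠ []) (n : ℤ) (hn : n ∉ l) :
    ((l.map a).prod) (e {n}) = 0 := by
  induction l with
  | nil => exact absurd rfl hl
  | cons j t ih =>
      rw [List.map_cons, List.prod_cons, ContinuousLinearMap.mul_apply]
      cases t with
      | nil =>
          simp only [List.map_nil, List.prod_nil, ContinuousLinearMap.one_apply]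
          rw [ha, if_neg]
          rintro ⟨hj, -⟩
          exact hn (by rw [← Finset.mem_singleton.1 hj]; exact List.mem_cons_self)
      | cons j2 t2 =>
          rw [ih (by simp) (fun h => hn (List.mem_cons_of_mem _ h)), map_zero]

include hadag in
lemma prodD_vanish (l : List ℤ) (hl : l ≠ []) (n : ℤ) (hn : ∀ i ∈ l, n ≤ i) :
    ((l.map adag).prod) (e {n}) = 0 := by
  induction l with
  | nil => exact absurd rfl hl
  | cons j t ih =>
      rw [List.map_cons, List.prod_cons, ContinuousLinearMap.mul_apply]
      cases t with
      | nil =>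
          simp only [List.map_nil, List.prod_nil, ContinuousLinearMap.one_apply]
          rw [hadag, if_neg]
          intro hc
          exact absurd (hc n (Finset.mem_singleton_self n))
            (not_lt.2 (hn j (List.mem_cons_self)))
      | cons j2 t2 =>
          rw [ih (by simp) (fun i hi => hn i (List.mem_cons_of_mem _ hi)), map_zero]

include ha hadag in
lemma form_vanish {X : Fm →L[ℂ] Fm} (hX : IsPositiveLengthForm a adag X) :
    ∀ᶠ n : ℤ in atBot, X (e {n}) = 0 := by
  rcases hX with ⟨is, js, -, -, hne, rfl⟩ | ⟨is, js, k, -, -, -, -, rfl⟩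
  · cases js with
    | nil =>
        have hisne : is ≠ [] := by simpa using hne
        filter_upwards [list_lt_eventually is] with n hn
        rw [ContinuousLinearMap.mul_apply]
        simp only [List.map_nil, List.prod_nil, ContinuousLinearMap.one_apply]
        exact prodD_vanish hadag is hisne n (fun i hi => le_of_lt (hn i hi))
    | cons j u =>
        filter_upwards [list_lt_eventually (j :: u)] with n hn
        rw [ContinuousLinearMap.mul_apply, prodA_vanish ha _ (by simp) n
          (fun h => absurd (hn n h) (lt_irrefl n)), map_zero]
  · cases js with
    | nil =>
        filter_upwards [eventually_le_atBot k] with n hn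
        have hP : (a k * adag k) (e ({n} : Finset ℤ)) = 0 := by
          rw [Pk_apply ha hadag, if_neg]
          intro hc
          exact absurd (hc n (Finset.mem_singleton_self n)) (not_lt.2 hn)
        rw [ContinuousLinearMap.mul_apply]
        simp only [List.map_nil, List.prod_nil, ContinuousLinearMap.one_apply]
        rw [ContinuousLinearMap.mul_apply, hP, map_zero]
    | cons j u =>
        filter_upwards [list_lt_eventually (j :: u)] with n hn
        rw [ContinuousLinearMap.mul_apply, prodA_vanish ha _ (by simp) n
          (fun h => absurd (hn n h) (lt_irrefl n)), map_zero]

include ha hadag in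
lemma span_vanish {Y : Fm →L[ℂ] Fm}
    (hY : Y ∈ Submodule.span ℂ {X : Fm →L[ℂ] Fm | IsPositiveLengthForm a adag X}) :
    ∀ᶠ n : ℤ in atBot, Y (e {n}) = 0 := by
  induction hY using Submodule.span_induction with
  | mem x hx => exact form_vanish ha hadag hx
  | zero => filter_upwards with n; simp
  | add x y _ _ ihx ihy => filter_upwards [ihx, ihy] with n h1 h2; simp [h1, h2]
  | smul c x _ ihx => filter_upwards [ihx] with n h1; simp [h1]

lemma psi_bound (X : Fm →L[ℂ] Fm) (A : Finset ℤ) : ‖⟪e A, X (e A)⟫_ℂ‖ ≤ ‖X‖ := by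
  calc ‖⟪e A, X (e A)⟫_ℂ‖ ≤ ‖e A‖ * ‖X (e A)‖ := norm_inner_le_norm _ _
  _ ≤ ‖e A‖ * (‖X‖ * ‖e A‖) :=
      mul_le_mul_of_nonneg_left (X.le_opNorm _) (norm_nonneg _)
  _ = ‖X‖ := by rw [e_norm]; ring

include ha hadag in
lemma tendsto_Am {X : Fm →L[ℂ] Fm} (hX : X ∈ Am a adag) :
    Tendsto (fun n : ℤ => ⟪e {n}, X (e {n})⟫_ℂ) atBot (𝓝 0) := by
  rw [Metric.tendsto_nhds]
  intro ε hε
  obtain ⟨Y, hYmem, hYd⟩ := Metric.mem_closure_iff.1 hX (ε / 2) (half_pos hε)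
  have hY := span_vanish ha hadag hYmem
  filter_upwards [hY] with n hn
  rw [dist_zero_right]
  have h1 : ⟪e {n}, X (e {n})⟫_ℂ = ⟪e ({n} : Finset ℤ), (X - Y) (e {n})⟫_ℂ := by
    rw [ContinuousLinearMap.sub_apply, hn, sub_zero]
  rw [h1]
  calc ‖⟪e ({n} : Finset ℤ), (X - Y) (e {n})⟫_ℂ‖ ≤ ‖X - Y‖ := psi_bound _ _
  _ = dist X Y := (dist_eq_norm X Y).symm
  _ < ε / 2 := hYd
  _ < ε := half_lt_self hε

include ha hadag in
lemma tendsto_c {X : Fm →L[ℂ] Fm} (hX : X ∈ Am a adag) (c : ℂ) :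
    Tendsto (fun n : ℤ => ⟪e {n}, (X + c • (1 : Fm →L[ℂ] Fm)) (e {n})⟫_ℂ) atBot (𝓝 c) := by
  have key : ∀ n : ℤ, ⟪e {n}, (X + c • (1 : Fm →L[ℂ] Fm)) (e {n})⟫_ℂ
      = ⟪e ({n} : Finset ℤ), X (e {n})⟫_ℂ + c := by
    intro n
    rw [ContinuousLinearMap.add_apply, inner_add_right, ContinuousLinearMap.smul_apply,
      ContinuousLinearMap.one_apply, inner_smul_right, e_inner, if_pos rfl, mul_one]
  simp only [key]
  simpa using (tendsto_Am ha hadag hX).add tendsto_const_nhds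

include ha hadag in
lemma c_norm_le {X : Fm →L[ℂ] Fm} (hX : X ∈ Am a adag) (c : ℂ) :
    ‖c‖ ≤ ‖X + c • (1 : Fm →L[ℂ] Fm)‖ :=
  le_of_tendsto (tendsto_c ha hadag hX c).norm
    (Filter.Eventually.of_forall fun n => psi_bound _ _)

end Psi

set_option maxHeartbeats 1000000 in
set_option synthInstance.maxHeartbeats 400000 in
/-- Corollary 4.8 (Corollary `noid2`): `ℜ_m = 𝔄_m + ℂI`: every element of `ℜ_m` can be
written (uniquely) as `X + cI` with `X ∈ 𝔄_m` and `c ∈ ℂ`, and conversely every such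
sum belongs to `ℜ_m`. -/
theorem Rm_eq_Am_add_scalars
    (a adag : ℤ → (Fm →L[ℂ] Fm))
    (ha : AnnihilatesOn a) (hadag : CreatesOn adag) :
    (∀ Z : Fm →L[ℂ] Fm, Z ∈ Rm a ↔
      ∃ X ∈ Am a adag, ∃ c : ℂ, Z = X + c • (1 : Fm →L[ℂ] Fm)) ∧
    (∀ X₁ ∈ Am a adag, ∀ X₂ ∈ Am a adag, ∀ c₁ c₂ : ℂ,
      X₁ + c₁ • (1 : Fm →L[ℂ] Fm) = X₂ + c₂ • (1 : Fm →L[ℂ] Fm) →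
      X₁ = X₂ ∧ c₁ = c₂) := by
  have hAmMod : ∀ {x y : Fm →L[ℂ] Fm}, x ∈ Am a adag → y ∈ Am a adag →
      x - y ∈ Am a adag := by
    intro x y hx hy
    have hx' : x ∈ ((Submodule.span ℂ
        {X : Fm →L[ℂ] Fm | IsPositiveLengthForm a adag X}).topologicalClosure :
          Set (Fm →L[ℂ] Fm)) := by
      rw [Submodule.topologicalClosure_coe]; exact hx
    have hy' : y ∈ ((Submodule.span ℂ
        {X : Fm →L[ℂ] Fm | IsPositiveLengthForm a adag X}).topologicalClosure :
          Set (Fm →L[ℂ] Fm)) := by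
      rw [Submodule.topologicalClosure_coe]; exact hy
    have hs := sub_mem (hx' : _ ∈ (Submodule.span ℂ _).topologicalClosure)
      (hy' : _ ∈ (Submodule.span ℂ _).topologicalClosure)
    have : x - y ∈ ((Submodule.span ℂ
        {X : Fm →L[ℂ] Fm | IsPositiveLengthForm a adag X}).topologicalClosure :
          Set (Fm →L[ℂ] Fm)) := hs
    rwa [Submodule.topologicalClosure_coe] at this
  constructor
  · intro Z
    constructor
    · intro hZ
      obtain ⟨z, hz_mem, hz_lim⟩ := mem_closure_iff_seq_limit.1 hZ
      have hdecomp : ∀ m : ℕ, ∃ Xm ∈ Am a adag, ∃ cm : ℂ,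
          z m = Xm + cm • (1 : Fm →L[ℂ] Fm) := by
        intro m
        have h := adjoin_sub_VV ha hadag (hz_mem m)
        rw [VV, Submodule.mem_span_insert] at h
        obtain ⟨cc, X', hX', hzz⟩ := h
        exact ⟨X', subset_closure hX', cc, by rw [hzz, add_comm]⟩
      choose Xs hXs cs hcs using hdecomp
      have hkey : ∀ i j : ℕ, dist (cs i) (cs j) ≤ dist (z i) (z j) := by
        intro i j
        have hsub : Xs i - Xs j ∈ Am a adag := hAmMod (hXs i) (hXs j)
        have hb := c_norm_le ha hadag hsub (cs i - cs j)
        have hz : (Xs i - Xs j) + (cs i - cs j) • (1 : Fm →L[ℂ] Fm) = z i - z j := by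
          rw [hcs i, hcs j, sub_smul]; abel
        rw [dist_eq_norm, dist_eq_norm]
        calc ‖cs i - cs j‖ ≤ ‖(Xs i - Xs j) + (cs i - cs j) • (1 : Fm →L[ℂ] Fm)‖ := hb
        _ = ‖z i - z j‖ := by rw [hz]
      have hc_cauchy : CauchySeq cs := by
        have hzc : CauchySeq z := hz_lim.cauchySeq
        rw [Metric.cauchySeq_iff] at hzc ⊢
        intro ε hε
        obtain ⟨N, hN⟩ := hzc ε hε
        exact ⟨N, fun i hi j hj => lt_of_le_of_lt (hkey i j) (hN i hi j hj)⟩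
      obtain ⟨γ, hγ⟩ := cauchySeq_tendsto_of_complete hc_cauchy
      have hXlim : Tendsto Xs atTop (𝓝 (Z - γ • (1 : Fm →L[ℂ] Fm))) := by
        have h1 : ∀ m, Xs m = z m - cs m • (1 : Fm →L[ℂ] Fm) := fun m => by
          rw [hcs m, add_sub_cancel_right]
        exact (hz_lim.sub (hγ.smul_const (1 : Fm →L[ℂ] Fm))).congr
          (fun m => (h1 m).symm)
      have hXmem : Z - γ • (1 : Fm →L[ℂ] Fm) ∈ Am a adag :=
        (isClosed_closure).mem_of_tendsto hXlim (Filter.Eventually.of_forall hXs)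
      exact ⟨Z - γ • (1 : Fm →L[ℂ] Fm), hXmem, γ, by abel⟩
    · rintro ⟨X, hX, c, rfl⟩
      have hsub : (Submodule.span ℂ
          {Y : Fm →L[ℂ] Fm | IsPositiveLengthForm a adag Y} : Set (Fm →L[ℂ] Fm))
          ⊆ (StarAlgebra.adjoin ℂ (Set.range a) : Set (Fm →L[ℂ] Fm)) := by
        intro x hx
        induction hx using Submodule.span_induction with
        | mem y hy => exact form_mem_adjoin ha hadag hy
        | zero => exact zero_mem _
        | add u v _ _ ihu ihv => exact add_mem ihu ihv
        | smul r u _ ihu => exact SMulMemClass.smul_mem r ihu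
      have hXR : X ∈ Rm a := closure_mono hsub hX
      have hcR : c • (1 : Fm →L[ℂ] Fm) ∈ Rm a :=
        subset_closure (SMulMemClass.smul_mem c (one_mem _))
      -- Rm is closed under addition since it is the closure of a submodule
      have hM : X + c • (1 : Fm →L[ℂ] Fm) ∈
          (Subalgebra.toSubmodule
            (StarAlgebra.adjoin ℂ (Set.range a)).toSubalgebra).topologicalClosure := by
        have h1 : X ∈ ((Subalgebra.toSubmodule
            (StarAlgebra.adjoin ℂ (Set.range a)).toSubalgebra).topologicalClosure :
              Set (Fm →L[ℂ] Fm)) := by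
          rw [Submodule.topologicalClosure_coe]; exact hXR
        have h2 : c • (1 : Fm →L[ℂ] Fm) ∈ ((Subalgebra.toSubmodule
            (StarAlgebra.adjoin ℂ (Set.range a)).toSubalgebra).topologicalClosure :
              Set (Fm →L[ℂ] Fm)) := by
          rw [Submodule.topologicalClosure_coe]; exact hcR
        exact add_mem h1 h2
      have hM' : X + c • (1 : Fm →L[ℂ] Fm) ∈
          ((Subalgebra.toSubmodule
            (StarAlgebra.adjoin ℂ (Set.range a)).toSubalgebra).topologicalClosure :
              Set (Fm →L[ℂ] Fm)) := hM
      rwa [Submodule.topologicalClosure_coe] at hM'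
  · intro X₁ h1 X₂ h2 c₁ c₂ heq
    have t1 := tendsto_c ha hadag h1 c₁
    have t2 := tendsto_c ha hadag h2 c₂
    rw [heq] at t1
    have hcc : c₁ = c₂ := tendsto_nhds_unique t1 t2
    subst hcc
    exact ⟨add_right_cancel heq, rfl⟩

end
end

section
/- For the monotone Yang–Baxter operator, 0 ≤ R^{(n)} ≤ I for every n. Equivalently (since R^{(n)} is diagonal in the canonical product basis): define t : ℤ × ℤ → ℝ by t(i, j) = −1 if i ≥ j and t(i, j) = 0 if i < j. Then for every n ≥ 1 and every tuple (i_1, …, i_n) ∈ ℤⁿ, the number r(i_1, …, i_n) := ∑_{j=0}^{n−1} ∏_{k=1}^{j} t(i_k, i_{k+1}) (the j = 0 summand being 1) belongs to {0, 1}. -/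
lemma monotone_R_aux
    (t : ℤ → ℤ → ℝ) (ht : ∀ i j : ℤ, t i j = if j ≤ i then -1 else 0)
    (x : ℕ → ℤ) (n : ℕ) :
    ((∑ j ∈ Finset.range (n + 1), ∏ k ∈ Finset.range j, t (x k) (x (k + 1))) = 0 ∨
     (∑ j ∈ Finset.range (n + 1), ∏ k ∈ Finset.range j, t (x k) (x (k + 1))) = 1) ∧
    ((∑ j ∈ Finset.range (n + 1), ∏ k ∈ Finset.range j, t (x k) (x (k + 1)))
        + ∏ k ∈ Finset.range (n + 1), t (x k) (x (k + 1)) = 0 ∨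
     (∑ j ∈ Finset.range (n + 1), ∏ k ∈ Finset.range j, t (x k) (x (k + 1)))
        + ∏ k ∈ Finset.range (n + 1), t (x k) (x (k + 1)) = 1) := by
  induction n with
  | zero =>
      constructor
      · right; simp
      · simp only [Finset.sum_range_one, Finset.prod_range_zero, Finset.prod_range_one, ht]
        by_cases h : x 1 ≤ x 0 <;> simp [h]
  | succ m ih =>
      have hS : (∑ j ∈ Finset.range (m + 2), ∏ k ∈ Finset.range j, t (x k) (x (k + 1)))
          = (∑ j ∈ Finset.range (m + 1), ∏ k ∈ Finset.range j, t (x k) (x (k + 1)))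
            + ∏ k ∈ Finset.range (m + 1), t (x k) (x (k + 1)) :=
        Finset.sum_range_succ _ _
      have hP : (∏ k ∈ Finset.range (m + 2), t (x k) (x (k + 1)))
          = (∏ k ∈ Finset.range (m + 1), t (x k) (x (k + 1))) * t (x (m + 1)) (x (m + 2)) :=
        Finset.prod_range_succ _ _
      refine ⟨by rw [hS]; exact ih.2, ?_⟩
      rw [hS, hP, ht]
      by_cases h : x (m + 2) ≤ x (m + 1)
      · simp only [h, if_pos]
        have key : (∑ j ∈ Finset.range (m + 1), ∏ k ∈ Finset.range j, t (x k) (x (k + 1)))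
            + (∏ k ∈ Finset.range (m + 1), t (x k) (x (k + 1)))
            + (∏ k ∈ Finset.range (m + 1), t (x k) (x (k + 1))) * (-1)
            = ∑ j ∈ Finset.range (m + 1), ∏ k ∈ Finset.range j, t (x k) (x (k + 1)) := by
          ring
        rw [key]
        exact ih.1
      · simp only [h, if_neg, not_false_iff, mul_zero, add_zero]
        exact ih.2

/-- For the monotone Yang–Baxter operator, `0 ≤ R⁽ⁿ⁾ ≤ I`. Since `R⁽ⁿ⁾` is diagonal in
the canonical product basis with eigenvalue
`r(i_1,…,i_n) = ∑_{j=0}^{n−1} ∏_{k=1}^{j} t(i_k, i_{k+1})` on `e_{i_1} ⊗ ⋯ ⊗ e_{i_n}`,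
where `t(i,j) = −1` if `i ≥ j` and `0` if `i < j`, this is equivalent to: for every
`n ≥ 1` and every tuple `(i_1,…,i_n) ∈ ℤⁿ` (formalized as `x : ℕ → ℤ`, `x k = i_{k+1}`),
the eigenvalue `r` belongs to `{0, 1}`. -/
theorem monotone_R_eigenvalues_mem_zero_one
    (t : ℤ → ℤ → ℝ) (ht : ∀ i j : ℤ, t i j = if j ≤ i then -1 else 0)
    (n : ℕ) (hn : 1 ≤ n) (x : ℕ → ℤ) :
    (∑ j ∈ Finset.range n, ∏ k ∈ Finset.range j, t (x k) (x (k + 1))) = 0 ∨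
    (∑ j ∈ Finset.range n, ∏ k ∈ Finset.range j, t (x k) (x (k + 1))) = 1 := by
  obtain ⟨m, rfl⟩ := Nat.exists_eq_add_of_le hn
  simpa [Nat.add_comm] using (monotone_R_aux t ht x m).1
end
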